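/- arXiv:1504.06898 — 9 statements merged into one kernel-verified Lean document; each statement's English description precedes it below -/
import Mathlib

section
/- (Huber; Lemma 1(i)) For every ε ∈ (0,1) and every measurable set A ⊆ Ψ, the upper posterior probability over all ε-contaminations of the marginal prior satisfies Π^{upper}(A|x) = (Π(A|x) + ε* r(A)) / (1 + ε* r(A)). -/
open MeasureTheory Set

variable {Ω : Type*} [MeasurableSpace Ω]

/-- The posterior probability of a set `A` when the prior is `μ` and the likelihood
(conditional prior predictive density `ψ ↦ m(x|ψ)`) is `f`. -/
noncomputable def postProb (f : Ω → ℝ) (μ : Measure Ω) (A : Set Ω) : ℝ :=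
  (∫ ψ in A, f ψ ∂μ) / (∫ ψ, f ψ ∂μ)

/-- The ε-contaminated prior `(1−ε)P + εQ`. -/
noncomputable def contam (P Q : Measure Ω) (ε : ℝ) : Measure Ω :=
  ENNReal.ofReal (1 - ε) • P + ENNReal.ofReal ε • Q

/-- `r(A) = sup_{ψ ∈ A} f(ψ) / m` (equal to `0` when `A = ∅` since `Real.sSup ∅ = 0`). -/
noncomputable def rSup (f : Ω → ℝ) (P : Measure Ω) (A : Set Ω) : ℝ :=
  sSup (f '' A) / ∫ ψ, f ψ ∂P

/-- The upper posterior probability over all ε-contaminations. -/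
noncomputable def upperPost (f : Ω → ℝ) (P : Measure Ω) (ε : ℝ) (A : Set Ω) : ℝ :=
  ⨆ Q : ProbabilityMeasure Ω, postProb f (contam P (Q : Measure Ω) ε) A

lemma bdd_integrable (f : Ω → ℝ) (hf : Measurable f)
    (C : ℝ) (habs : ∀ ψ, |f ψ| ≤ C) (μ : Measure Ω) [IsFiniteMeasure μ] :
    Integrable f μ :=
  (integrable_const C).mono' hf.aestronglyMeasurable (ae_of_all _ habs)

lemma integral_contam (f : Ω → ℝ) (P Q : Measure Ω) (ε : ℝ) (hε0 : 0 ≤ ε) (hε1 : ε ≤ 1)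
    (hP : Integrable f P) (hQ : Integrable f Q) :
    ∫ ψ, f ψ ∂(contam P Q ε) = (1 - ε) * ∫ ψ, f ψ ∂P + ε * ∫ ψ, f ψ ∂Q := by
  rw [contam, integral_add_measure (hP.smul_measure ENNReal.ofReal_ne_top)
      (hQ.smul_measure ENNReal.ofReal_ne_top),
    integral_smul_measure, integral_smul_measure,
    ENNReal.toReal_ofReal (by linarith), ENNReal.toReal_ofReal hε0]
  simp [smul_eq_mul]

lemma contam_restrict (P Q : Measure Ω) (ε : ℝ) (A : Set Ω) :
    (contam P Q ε).restrict A = contam (P.restrict A) (Q.restrict A) ε := by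
  simp [contam, Measure.restrict_add, Measure.restrict_smul]

lemma setIntegral_contam (f : Ω → ℝ) (P Q : Measure Ω) (ε : ℝ) (hε0 : 0 ≤ ε) (hε1 : ε ≤ 1)
    (A : Set Ω) (hP : Integrable f (P.restrict A)) (hQ : Integrable f (Q.restrict A)) :
    ∫ ψ in A, f ψ ∂(contam P Q ε)
      = (1 - ε) * ∫ ψ in A, f ψ ∂P + ε * ∫ ψ in A, f ψ ∂Q := by
  rw [contam_restrict]
  exact integral_contam f _ _ ε hε0 hε1 hP hQ

/-- Huber's Lemma 1 (i): Π^{upper}(A|x) = (Π(A|x) + ε* r(A)) / (1 + ε* r(A)). -/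
theorem upperPost_eq
    (f : Ω → ℝ) (hf : Measurable f) (hf0 : ∀ ψ, 0 ≤ f ψ)
    (C : ℝ) (hfC : ∀ ψ, f ψ ≤ C)
    (P : Measure Ω) [IsProbabilityMeasure P]
    (hm : 0 < ∫ ψ, f ψ ∂P)
    (ε : ℝ) (hε : ε ∈ Set.Ioo (0 : ℝ) 1)
    (A : Set Ω) (hA : MeasurableSet A) :
    upperPost f P ε A =
      (postProb f P A + (ε / (1 - ε)) * rSup f P A) /
        (1 + (ε / (1 - ε)) * rSup f P A) := by
  obtain ⟨hε0, hε1⟩ := hε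
  have h1ε : (0:ℝ) < 1 - ε := by linarith
  have habs : ∀ ψ, |f ψ| ≤ C := fun ψ => abs_le.2 ⟨by linarith [hf0 ψ, hfC ψ], hfC ψ⟩
  set m := ∫ ψ, f ψ ∂P with hmdef
  set IA := ∫ ψ in A, f ψ ∂P with hIAdef
  set s := sSup (f '' A) with hsdef
  have hΩ : Nonempty Ω := by
    by_contra h
    rw [not_nonempty_iff] at h
    have h1 : P Set.univ = 1 := measure_univ
    rw [Set.univ_eq_empty_iff.2 h, measure_empty] at h1
    exact zero_ne_one h1
  have hPMne : Nonempty (ProbabilityMeasure Ω) :=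
    ⟨⟨Measure.dirac hΩ.some, inferInstance⟩⟩
  have hPint : Integrable f P := bdd_integrable f hf C habs P
  have hIA0 : 0 ≤ IA := setIntegral_nonneg hA fun ψ _ => hf0 ψ
  have hIAm : IA ≤ m := setIntegral_le_integral hPint (ae_of_all _ hf0)
  have hbdd : BddAbove (f '' A) := ⟨C, by rintro y ⟨ψ, _, rfl⟩; exact hfC ψ⟩
  have hfs : ∀ ψ ∈ A, f ψ ≤ s := fun ψ hψ => le_csSup hbdd (mem_image_of_mem f hψ)
  have hs0 : 0 ≤ s := by
    rcases A.eq_empty_or_nonempty with h | ⟨ψ, hψ⟩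
    · simp [hsdef, h, Real.sSup_empty]
    · exact le_trans (hf0 ψ) (hfs ψ hψ)
  have hD : 0 < (1 - ε) * m + ε * s := by nlinarith
  -- per-Q formula and bound
  have hform : ∀ Q : ProbabilityMeasure Ω,
      postProb f (contam P (Q : Measure Ω) ε) A =
        ((1 - ε) * IA + ε * ∫ ψ in A, f ψ ∂(Q : Measure Ω)) /
          ((1 - ε) * m + ε * ∫ ψ, f ψ ∂(Q : Measure Ω)) := by
    intro Q
    have hQint : Integrable f (Q : Measure Ω) := bdd_integrable f hf C habs _
    rw [postProb, setIntegral_contam f P _ ε hε0.le hε1.le A hPint.restrict hQint.restrict,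
      integral_contam f P _ ε hε0.le hε1.le hPint hQint]
  have hQbound : ∀ Q : ProbabilityMeasure Ω,
      postProb f (contam P (Q : Measure Ω) ε) A ≤
        ((1 - ε) * IA + ε * s) / ((1 - ε) * m + ε * s) := by
    intro Q
    have hQint : Integrable f (Q : Measure Ω) := bdd_integrable f hf C habs _
    set tQ := ∫ ψ in A, f ψ ∂(Q : Measure Ω) with htQ
    set bQ := ∫ ψ, f ψ ∂(Q : Measure Ω) with hbQ
    have ht0 : 0 ≤ tQ := setIntegral_nonneg hA fun ψ _ => hf0 ψ
    have htb : tQ ≤ bQ := setIntegral_le_integral hQint (ae_of_all _ hf0)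
    have hts : tQ ≤ s := by
      have h1 : tQ ≤ ∫ _ in A, s ∂(Q : Measure Ω) := by
        apply setIntegral_mono_on hQint.restrict (integrableOn_const ?_) hA hfs
        exact measure_ne_top _ _
      have h2 : ∫ _ in A, s ∂(Q : Measure Ω) = ((Q : Measure Ω) A).toReal * s := by
        rw [setIntegral_const, smul_eq_mul, measureReal_def]
      have h3 : ((Q : Measure Ω) A).toReal ≤ 1 := by
        have := measure_mono (Set.subset_univ A) (μ := (Q : Measure Ω))
        have huniv : ((Q : Measure Ω) Set.univ) = 1 := measure_univ
        calc ((Q : Measure Ω) A).toReal ≤ ((Q : Measure Ω) Set.univ).toReal :=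
              ENNReal.toReal_mono (by simp [huniv]) this
          _ = 1 := by simp [huniv]
      nlinarith
    have hDq : 0 < (1 - ε) * m + ε * bQ := by nlinarith
    rw [hform Q, ← htQ, ← hbQ, div_le_div_iff₀ hDq hD]
    nlinarith [mul_nonneg (mul_nonneg hε0.le h1ε.le) (mul_nonneg hIA0 (sub_nonneg.2 htb)),
      mul_nonneg (mul_nonneg hε0.le h1ε.le)
        (mul_nonneg (sub_nonneg.2 hts) (sub_nonneg.2 hIAm)),
      mul_nonneg (mul_nonneg hε0.le hε0.le) (mul_nonneg hs0 (sub_nonneg.2 htb))]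
  have hbddR : BddAbove (Set.range fun Q : ProbabilityMeasure Ω =>
      postProb f (contam P (Q : Measure Ω) ε) A) :=
    ⟨_, forall_mem_range.2 hQbound⟩
  -- value at a Dirac contamination
  have hdirac : ∀ ψ ∈ A,
      ((1 - ε) * IA + ε * f ψ) / ((1 - ε) * m + ε * f ψ) ≤ upperPost f P ε A := by
    intro ψ hψ
    classical
    have hform' : postProb f (contam P (Measure.dirac ψ) ε) A =
        ((1 - ε) * IA + ε * f ψ) / ((1 - ε) * m + ε * f ψ) := by
      have hQint : Integrable f (Measure.dirac ψ) := bdd_integrable f hf C habs _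
      rw [postProb, setIntegral_contam f P _ ε hε0.le hε1.le A hPint.restrict hQint.restrict,
        integral_contam f P _ ε hε0.le hε1.le hPint hQint,
        setIntegral_dirac' hf.stronglyMeasurable ψ hA, if_pos hψ,
        integral_dirac' f ψ hf.stronglyMeasurable]
    rw [← hform']
    exact le_ciSup hbddR ⟨Measure.dirac ψ, inferInstance⟩
  -- main equality with the convenient form
  have hmain : upperPost f P ε A = ((1 - ε) * IA + ε * s) / ((1 - ε) * m + ε * s) := by
    refine le_antisymm (ciSup_le hQbound) ?_
    rcases A.eq_empty_or_nonempty with hAe | hAne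
    · have hs' : s = 0 := by simp [hsdef, hAe, Real.sSup_empty]
      have hIA' : IA = 0 := by simp [hIAdef, hAe]
      rw [hs', hIA']
      simp only [mul_zero, add_zero, zero_div]
      obtain ⟨Q0⟩ := hPMne
      have h0 : (0:ℝ) ≤ postProb f (contam P (Q0 : Measure Ω) ε) A := by
        rw [hform Q0]
        have hQint : Integrable f (Q0 : Measure Ω) := bdd_integrable f hf C habs _
        have : 0 ≤ ∫ ψ, f ψ ∂(Q0 : Measure Ω) := integral_nonneg hf0
        have ht0 : 0 ≤ ∫ ψ in A, f ψ ∂(Q0 : Measure Ω) :=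
          setIntegral_nonneg hA fun ψ _ => hf0 ψ
        apply div_nonneg (by nlinarith) (by nlinarith)
      exact le_trans h0 (le_ciSup hbddR Q0)
    · -- approximate s from below
      apply le_of_forall_pos_le_add
      intro η hη
      set δ := η * ((1 - ε) * m) / ε with hδdef
      have hδ0 : 0 < δ := div_pos (mul_pos hη (mul_pos h1ε hm)) hε0
      obtain ⟨y, hy⟩ := exists_lt_of_lt_csSup (hAne.image f)
        (show s - δ < s by linarith)
      obtain ⟨ψ, hψA, rfl⟩ := hy.1
      have hylt : s - δ < f ψ := hy.2
      have hts : f ψ ≤ s := hfs ψ hψA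
      have ht0 : 0 ≤ f ψ := hf0 ψ
      have hDt : 0 < (1 - ε) * m + ε * f ψ := by nlinarith
      have hsub : ((1 - ε) * IA + ε * s) / ((1 - ε) * m + ε * s)
          - ((1 - ε) * IA + ε * f ψ) / ((1 - ε) * m + ε * f ψ) ≤ η := by
        rw [div_sub_div _ _ (ne_of_gt hD) (ne_of_gt hDt), div_le_iff₀ (mul_pos hD hDt)]
        have hkey : ((1 - ε) * IA + ε * s) * ((1 - ε) * m + ε * f ψ)
            - ((1 - ε) * m + ε * s) * ((1 - ε) * IA + ε * f ψ)
            = ε * (1 - ε) * ((s - f ψ) * (m - IA)) := by ring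
        have h2 : (s - f ψ) * (m - IA) ≤ δ * m := by nlinarith
        have h3 : ε * (1 - ε) * (δ * m) = η * (((1 - ε) * m) * ((1 - ε) * m)) := by
          rw [hδdef]; field_simp
        have h4 : η * (((1 - ε) * m) * ((1 - ε) * m)) ≤
            η * (((1 - ε) * m + ε * s) * ((1 - ε) * m + ε * f ψ)) := by
          have e1 : (1 - ε) * m ≤ (1 - ε) * m + ε * s := by nlinarith
          have e2 : (1 - ε) * m ≤ (1 - ε) * m + ε * f ψ := by nlinarith
          have e0 : 0 < (1 - ε) * m := by nlinarith
          exact mul_le_mul_of_nonneg_left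
            (mul_le_mul e1 e2 e0.le (by linarith)) hη.le
        have hstep : ε * (1 - ε) * ((s - f ψ) * (m - IA)) ≤ ε * (1 - ε) * (δ * m) :=
          mul_le_mul_of_nonneg_left h2 (mul_nonneg hε0.le h1ε.le)
        linarith
      linarith [hdirac ψ hψA]
  rw [hmain, postProb, rSup, ← hmdef, ← hIAdef, ← hsdef]
  have hden1 : 0 < 1 + ε / (1 - ε) * (s / m) := by
    have : 0 ≤ ε / (1 - ε) * (s / m) :=
      mul_nonneg (div_nonneg hε0.le h1ε.le) (div_nonneg hs0 hm.le)
    linarith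
  rw [div_eq_div_iff (ne_of_gt hD) (ne_of_gt hden1)]
  field_simp
end

section
/- (Proposition 1(ii)) Fix ε ∈ (0,1) and γ ∈ (0,1), assume 1−γ*(x) ∈ (0,1) and r(C_{1−γ*(x)}) = r(Ψ). Then among all measurable sets A ⊆ Ψ satisfying Π(A|x) ≥ γ*(x) and r(A^c) = r(Ψ), the complement (C_{1−γ*(x)})^c of the (1−γ*(x))-relative belief credible region minimizes δ: for every such A, δ((C_{1−γ*(x)})^c) ≤ δ(A). -/
open MeasureTheory Set

variable {Ω : Type*} [MeasurableSpace Ω]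

/-- The lower posterior probability over all ε-contaminations. -/
noncomputable def lowerPost (f : Ω → ℝ) (P : Measure Ω) (ε : ℝ) (A : Set Ω) : ℝ :=
  ⨅ Q : ProbabilityMeasure Ω, postProb f (contam P (Q : Measure Ω) ε) A

/-- `δ(A) = Π^{upper}(A|x) − Π^{lower}(A|x)`. -/
noncomputable def deltaPost (f : Ω → ℝ) (P : Measure Ω) (ε : ℝ) (A : Set Ω) : ℝ :=
  upperPost f P ε A - lowerPost f P ε A

/-- The relative belief ratio `RB(ψ) = f(ψ)/m`. -/
noncomputable def RBr (f : Ω → ℝ) (P : Measure Ω) (ψ : Ω) : ℝ :=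
  f ψ / ∫ x, f x ∂P

/-- `c_γ = inf {k ≥ 0 : Π({ψ : RB(ψ) ≤ k}|x) ≥ 1 − γ}`. -/
noncomputable def cGamma (f : Ω → ℝ) (P : Measure Ω) (γ : ℝ) : ℝ :=
  sInf {k : ℝ | 0 ≤ k ∧ 1 - γ ≤ postProb f P {ψ | RBr f P ψ ≤ k}}

/-- The γ-relative belief credible region `C_γ = {ψ : RB(ψ) ≥ c_γ}`. -/
noncomputable def credRegion (f : Ω → ℝ) (P : Measure Ω) (γ : ℝ) : Set Ω :=
  {ψ | cGamma f P γ ≤ RBr f P ψ}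

set_option linter.unusedSectionVars false
set_option linter.unusedVariables false
section
open Filter

section RBaux

lemma RBaux_integrable {f : Ω → ℝ} (hf : Measurable f) (hf0 : ∀ ψ, 0 ≤ f ψ)
    {C : ℝ} (hfC : ∀ ψ, f ψ ≤ C) (Q : Measure Ω) [IsFiniteMeasure Q] :
    Integrable f Q :=
  Integrable.mono' (integrable_const C) hf.aestronglyMeasurable
    (Filter.Eventually.of_forall fun ψ => by
      rw [Real.norm_eq_abs, abs_of_nonneg (hf0 ψ)]; exact hfC ψ)

lemma RBaux_setIntegral_contam {f : Ω → ℝ} (hf : Measurable f) (hf0 : ∀ ψ, 0 ≤ f ψ)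
    {C : ℝ} (hfC : ∀ ψ, f ψ ≤ C) (P Q : Measure Ω) [IsFiniteMeasure P] [IsFiniteMeasure Q]
    {ε : ℝ} (hε0 : 0 ≤ ε) (hε1 : ε ≤ 1) (A : Set Ω) :
    ∫ ψ in A, f ψ ∂(contam P Q ε)
      = (1 - ε) * ∫ ψ in A, f ψ ∂P + ε * ∫ ψ in A, f ψ ∂Q := by
  have hiP := (RBaux_integrable hf hf0 hfC P).restrict (s := A)
  have hiQ := (RBaux_integrable hf hf0 hfC Q).restrict (s := A)
  rw [contam, Measure.restrict_add, Measure.restrict_smul, Measure.restrict_smul,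
    integral_add_measure (hiP.smul_measure ENNReal.ofReal_ne_top)
      (hiQ.smul_measure ENNReal.ofReal_ne_top),
    integral_smul_measure, integral_smul_measure,
    ENNReal.toReal_ofReal (by linarith), ENNReal.toReal_ofReal hε0, smul_eq_mul, smul_eq_mul]

lemma RBaux_integral_contam {f : Ω → ℝ} (hf : Measurable f) (hf0 : ∀ ψ, 0 ≤ f ψ)
    {C : ℝ} (hfC : ∀ ψ, f ψ ≤ C) (P Q : Measure Ω) [IsFiniteMeasure P] [IsFiniteMeasure Q]
    {ε : ℝ} (hε0 : 0 ≤ ε) (hε1 : ε ≤ 1) :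
    ∫ ψ, f ψ ∂(contam P Q ε)
      = (1 - ε) * ∫ ψ, f ψ ∂P + ε * ∫ ψ, f ψ ∂Q := by
  simpa using RBaux_setIntegral_contam hf hf0 hfC P Q hε0 hε1 univ

lemma RBaux_sSup_nonneg {f : Ω → ℝ} (hf0 : ∀ ψ, 0 ≤ f ψ) (A : Set Ω) :
    0 ≤ sSup (f '' A) := by
  rcases A.eq_empty_or_nonempty with rfl | ⟨ψ, hψ⟩
  · simp [Real.sSup_empty]
  · exact Real.sSup_nonneg (by rintro x ⟨y, _, rfl⟩; exact hf0 y)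

lemma RBaux_bddAbove_image {f : Ω → ℝ} {C : ℝ} (hfC : ∀ ψ, f ψ ≤ C) (A : Set Ω) :
    BddAbove (f '' A) :=
  ⟨C, by rintro x ⟨y, _, rfl⟩; exact hfC y⟩

lemma RBaux_le_sSup {f : Ω → ℝ} {C : ℝ} (hfC : ∀ ψ, f ψ ≤ C) {A : Set Ω} {ψ : Ω}
    (hψ : ψ ∈ A) : f ψ ≤ sSup (f '' A) :=
  le_csSup (RBaux_bddAbove_image hfC A) (mem_image_of_mem f hψ)

lemma RBaux_setIntegral_le_sSup {f : Ω → ℝ} (hf : Measurable f) (hf0 : ∀ ψ, 0 ≤ f ψ)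
    {C : ℝ} (hfC : ∀ ψ, f ψ ≤ C) (Q : Measure Ω) [IsProbabilityMeasure Q]
    {A : Set Ω} (hA : MeasurableSet A) :
    ∫ ψ in A, f ψ ∂Q ≤ sSup (f '' A) := by
  have ht0 : 0 ≤ sSup (f '' A) := RBaux_sSup_nonneg hf0 A
  calc ∫ ψ in A, f ψ ∂Q ≤ ∫ _ in A, sSup (f '' A) ∂Q := by
        refine setIntegral_mono_on ((RBaux_integrable hf hf0 hfC Q).integrableOn)
          (integrable_const _).integrableOn hA fun ψ hψ => RBaux_le_sSup hfC hψ
    _ = (Q A).toReal * sSup (f '' A) := by rw [setIntegral_const, smul_eq_mul]; rfl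
    _ ≤ sSup (f '' A) := by
        refine mul_le_of_le_one_left ht0 ?_
        have h1 : Q A ≤ 1 := prob_le_one
        exact ENNReal.toReal_le_of_le_ofReal one_pos.le (by simpa using h1)

end RBaux

section RBmain

lemma RBaux_nonempty {f : Ω → ℝ} (P : Measure Ω) [IsProbabilityMeasure P]
    (hm : 0 < ∫ ψ, f ψ ∂P) : Nonempty Ω := by
  by_contra h
  rw [not_nonempty_iff] at h
  have h1 : (P univ) = 1 := measure_univ
  rw [Set.univ_eq_empty_iff.2 h, measure_empty] at h1
  exact zero_ne_one h1

lemma RBaux_postProb_contam_mem {f : Ω → ℝ} (hf : Measurable f) (hf0 : ∀ ψ, 0 ≤ f ψ)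
    {C : ℝ} (hfC : ∀ ψ, f ψ ≤ C) (P : Measure Ω) [IsProbabilityMeasure P]
    (hm : 0 < ∫ ψ, f ψ ∂P) {ε : ℝ} (hε : ε ∈ Set.Ioo (0:ℝ) 1)
    (A : Set Ω) (Q : ProbabilityMeasure Ω) :
    postProb f (contam P (Q : Measure Ω) ε) A ∈ Set.Icc (0:ℝ) 1 := by
  obtain ⟨hε0, hε1⟩ := hε
  have hu0 : 0 ≤ ∫ ψ in A, f ψ ∂(Q : Measure Ω) := integral_nonneg fun ψ => hf0 ψ
  have huv : ∫ ψ in A, f ψ ∂(Q : Measure Ω) ≤ ∫ ψ, f ψ ∂(Q : Measure Ω) :=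
    setIntegral_le_integral (RBaux_integrable hf hf0 hfC _) (Eventually.of_forall hf0)
  have ha0 : 0 ≤ ∫ ψ in A, f ψ ∂P := integral_nonneg fun ψ => hf0 ψ
  have ham : ∫ ψ in A, f ψ ∂P ≤ ∫ ψ, f ψ ∂P :=
    setIntegral_le_integral (RBaux_integrable hf hf0 hfC _) (Eventually.of_forall hf0)
  rw [postProb, RBaux_setIntegral_contam hf hf0 hfC _ _ hε0.le hε1.le,
    RBaux_integral_contam hf hf0 hfC _ _ hε0.le hε1.le]
  have hden : 0 < (1 - ε) * ∫ ψ, f ψ ∂P + ε * ∫ ψ, f ψ ∂(Q : Measure Ω) := by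
    nlinarith [hu0.trans huv]
  constructor
  · exact div_nonneg (by nlinarith) hden.le
  · rw [div_le_one hden]; nlinarith

lemma RBaux_bddAbove_range {f : Ω → ℝ} (hf : Measurable f) (hf0 : ∀ ψ, 0 ≤ f ψ)
    {C : ℝ} (hfC : ∀ ψ, f ψ ≤ C) (P : Measure Ω) [IsProbabilityMeasure P]
    (hm : 0 < ∫ ψ, f ψ ∂P) {ε : ℝ} (hε : ε ∈ Set.Ioo (0:ℝ) 1) (A : Set Ω) :
    BddAbove (Set.range fun Q : ProbabilityMeasure Ω =>
      postProb f (contam P (Q : Measure Ω) ε) A) := by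
  refine ⟨1, ?_⟩
  rintro x ⟨Q, rfl⟩
  exact (RBaux_postProb_contam_mem hf hf0 hfC P hm hε A Q).2

lemma RBaux_bddBelow_range {f : Ω → ℝ} (hf : Measurable f) (hf0 : ∀ ψ, 0 ≤ f ψ)
    {C : ℝ} (hfC : ∀ ψ, f ψ ≤ C) (P : Measure Ω) [IsProbabilityMeasure P]
    (hm : 0 < ∫ ψ, f ψ ∂P) {ε : ℝ} (hε : ε ∈ Set.Ioo (0:ℝ) 1) (A : Set Ω) :
    BddBelow (Set.range fun Q : ProbabilityMeasure Ω =>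
      postProb f (contam P (Q : Measure Ω) ε) A) := by
  refine ⟨0, ?_⟩
  rintro x ⟨Q, rfl⟩
  exact (RBaux_postProb_contam_mem hf hf0 hfC P hm hε A Q).1
end RBmain

section RBform

lemma RBaux_postProb_dirac {f : Ω → ℝ} (hf : Measurable f) (hf0 : ∀ ψ, 0 ≤ f ψ)
    {C : ℝ} (hfC : ∀ ψ, f ψ ≤ C) (P : Measure Ω) [IsProbabilityMeasure P]
    {ε : ℝ} (hε : ε ∈ Set.Ioo (0:ℝ) 1) {A : Set Ω} (hA : MeasurableSet A) (ψ : Ω) :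
    postProb f (contam P (Measure.dirac ψ) ε) A
      = ((1-ε) * (∫ x in A, f x ∂P) + ε * A.indicator f ψ)
        / ((1-ε) * (∫ x, f x ∂P) + ε * f ψ) := by
  classical
  rw [postProb, RBaux_setIntegral_contam hf hf0 hfC _ _ hε.1.le hε.2.le,
    RBaux_integral_contam hf hf0 hfC _ _ hε.1.le hε.2.le,
    integral_dirac' f ψ hf.stronglyMeasurable,
    setIntegral_dirac' hf.stronglyMeasurable ψ hA]
  rw [Set.indicator]

lemma RBaux_upper_formula {f : Ω → ℝ} (hf : Measurable f) (hf0 : ∀ ψ, 0 ≤ f ψ)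
    {C : ℝ} (hfC : ∀ ψ, f ψ ≤ C) (P : Measure Ω) [IsProbabilityMeasure P]
    (hm : 0 < ∫ ψ, f ψ ∂P) {ε : ℝ} (hε : ε ∈ Set.Ioo (0:ℝ) 1)
    {A : Set Ω} (hA : MeasurableSet A) :
    upperPost f P ε A
      = ((1-ε) * (∫ ψ in A, f ψ ∂P) + ε * sSup (f '' A))
        / ((1-ε) * (∫ ψ, f ψ ∂P) + ε * sSup (f '' A)) := by
  classical
  obtain ⟨hε0, hε1⟩ := hε
  have hne : Nonempty Ω := RBaux_nonempty P hm
  obtain ⟨ψ₀⟩ := hne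
  haveI : Nonempty (ProbabilityMeasure Ω) := ⟨⟨Measure.dirac ψ₀, inferInstance⟩⟩
  set m := ∫ ψ, f ψ ∂P with hmdef
  set a := ∫ ψ in A, f ψ ∂P with hadef
  set t := sSup (f '' A) with htdef
  have ht0 : 0 ≤ t := RBaux_sSup_nonneg hf0 A
  have ha0 : 0 ≤ a := integral_nonneg fun ψ => hf0 ψ
  have ham : a ≤ m :=
    setIntegral_le_integral (RBaux_integrable hf hf0 hfC _) (Eventually.of_forall hf0)
  have hden : 0 < (1-ε) * m + ε * t := by nlinarith
  refine le_antisymm (ciSup_le fun Q => ?_) ?_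
  · -- each contamination posterior is at most the formula value
    set u := ∫ ψ in A, f ψ ∂(Q : Measure Ω) with hudef
    set v := ∫ ψ, f ψ ∂(Q : Measure Ω) with hvdef
    have hu0 : 0 ≤ u := integral_nonneg fun ψ => hf0 ψ
    have huv : u ≤ v :=
      setIntegral_le_integral (RBaux_integrable hf hf0 hfC _) (Eventually.of_forall hf0)
    have hut : u ≤ t := RBaux_setIntegral_le_sSup hf hf0 hfC _ hA
    have hdenQ : 0 < (1-ε) * m + ε * v := by nlinarith [hu0.trans huv]
    rw [postProb, RBaux_setIntegral_contam hf hf0 hfC _ _ hε0.le hε1.le,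
      RBaux_integral_contam hf hf0 hfC _ _ hε0.le hε1.le, ← hmdef, ← hadef, ← hudef, ← hvdef,
      div_le_div_iff₀ hdenQ hden]
    have e1 : (0:ℝ) ≤ ε * (1-ε) * (a * (v - u)) :=
      mul_nonneg (mul_nonneg hε0.le (by linarith)) (mul_nonneg ha0 (sub_nonneg.2 huv))
    have e2 : (0:ℝ) ≤ ε * (1-ε) * ((t - u) * (m - a)) :=
      mul_nonneg (mul_nonneg hε0.le (by linarith))
        (mul_nonneg (sub_nonneg.2 hut) (sub_nonneg.2 ham))
    have e3 : (0:ℝ) ≤ ε * ε * (t * (v - u)) :=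
      mul_nonneg (mul_nonneg hε0.le hε0.le) (mul_nonneg ht0 (sub_nonneg.2 huv))
    nlinarith [e1, e2, e3]
  · -- the formula value is a limit of contamination posteriors at dirac measures
    rcases A.eq_empty_or_nonempty with rfl | ⟨ψA, hψA⟩
    · have : (0:ℝ) ≤ ⨆ Q : ProbabilityMeasure Ω, postProb f (contam P (Q : Measure Ω) ε) ∅ := by
        have h := le_ciSup (RBaux_bddAbove_range hf hf0 hfC P hm ⟨hε0, hε1⟩ (∅ : Set Ω))
          (⟨Measure.dirac ψ₀, inferInstance⟩ : ProbabilityMeasure Ω)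
        simpa [postProb, Measure.restrict_empty, integral_zero_measure] using h
      calc ((1-ε) * a + ε * t) / ((1-ε) * m + ε * t) = 0 := by
            have ha' : a = 0 := by
              rw [hadef, Measure.restrict_empty, integral_zero_measure]
            have ht' : t = 0 := by rw [htdef, image_empty, Real.sSup_empty]
            rw [ha', ht']; ring_nf
        _ ≤ _ := this
    · -- A nonempty
      obtain ⟨w, hw_mono, hw_tend, hw_mem⟩ :=
        exists_seq_tendsto_sSup (⟨f ψA, mem_image_of_mem f hψA⟩ : (f '' A).Nonempty)
          (RBaux_bddAbove_image hfC A)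
      choose ψs hψs hfψs using fun n => (hw_mem n : w n ∈ f '' A)
      set g : ℝ → ℝ := fun x => ((1-ε) * a + ε * x) / ((1-ε) * m + ε * x) with hg
      have htend : Tendsto (fun n => g (w n)) atTop (nhds (g t)) := by
        have h1 : Tendsto (fun n => (1-ε) * a + ε * w n) atTop (nhds ((1-ε) * a + ε * t)) :=
          (hw_tend.const_mul ε).const_add _
        have h2 : Tendsto (fun n => (1-ε) * m + ε * w n) atTop (nhds ((1-ε) * m + ε * t)) :=
          (hw_tend.const_mul ε).const_add _
        exact h1.div h2 hden.ne'
      refine le_of_tendsto htend (Eventually.of_forall fun n => ?_)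
      have hval : postProb f (contam P (Measure.dirac (ψs n)) ε) A = g (w n) := by
        rw [RBaux_postProb_dirac hf hf0 hfC P ⟨hε0, hε1⟩ hA, Set.indicator_of_mem (hψs n),
          hfψs n]
      calc g (w n) = postProb f (contam P (Measure.dirac (ψs n)) ε) A := hval.symm
        _ ≤ _ := le_ciSup (RBaux_bddAbove_range hf hf0 hfC P hm ⟨hε0, hε1⟩ A)
            (⟨Measure.dirac (ψs n), inferInstance⟩ : ProbabilityMeasure Ω)
end RBform

section RBlow

lemma RBaux_lower_formula {f : Ω → ℝ} (hf : Measurable f) (hf0 : ∀ ψ, 0 ≤ f ψ)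
    {C : ℝ} (hfC : ∀ ψ, f ψ ≤ C) (P : Measure Ω) [IsProbabilityMeasure P]
    (hm : 0 < ∫ ψ, f ψ ∂P) {ε : ℝ} (hε : ε ∈ Set.Ioo (0:ℝ) 1)
    {A : Set Ω} (hA : MeasurableSet A) (hAc : Aᶜ.Nonempty) :
    lowerPost f P ε A
      = ((1-ε) * (∫ ψ in A, f ψ ∂P))
        / ((1-ε) * (∫ ψ, f ψ ∂P) + ε * sSup (f '' Aᶜ)) := by
  classical
  obtain ⟨hε0, hε1⟩ := hε
  obtain ⟨ψ₀, hψ₀⟩ := hAc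
  haveI : Nonempty (ProbabilityMeasure Ω) := ⟨⟨Measure.dirac ψ₀, inferInstance⟩⟩
  set m := ∫ ψ, f ψ ∂P with hmdef
  set a := ∫ ψ in A, f ψ ∂P with hadef
  set t := sSup (f '' Aᶜ) with htdef
  have ht0 : 0 ≤ t := RBaux_sSup_nonneg hf0 Aᶜ
  have ha0 : 0 ≤ a := integral_nonneg fun ψ => hf0 ψ
  have ham : a ≤ m :=
    setIntegral_le_integral (RBaux_integrable hf hf0 hfC _) (Eventually.of_forall hf0)
  have hden : 0 < (1-ε) * m + ε * t := by nlinarith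
  refine le_antisymm ?_ (le_ciInf fun Q => ?_)
  · -- the formula value is a limit of contamination posteriors at dirac measures in Aᶜ
    obtain ⟨w, hw_mono, hw_tend, hw_mem⟩ :=
      exists_seq_tendsto_sSup (⟨f ψ₀, mem_image_of_mem f hψ₀⟩ : (f '' Aᶜ).Nonempty)
        (RBaux_bddAbove_image hfC Aᶜ)
    choose ψs hψs hfψs using fun n => (hw_mem n : w n ∈ f '' Aᶜ)
    set g : ℝ → ℝ := fun x => ((1-ε) * a) / ((1-ε) * m + ε * x) with hg
    have htend : Tendsto (fun n => g (w n)) atTop (nhds (g t)) := by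
      have h2 : Tendsto (fun n => (1-ε) * m + ε * w n) atTop (nhds ((1-ε) * m + ε * t)) :=
        (hw_tend.const_mul ε).const_add _
      exact tendsto_const_nhds.div h2 hden.ne'
    refine ge_of_tendsto htend (Eventually.of_forall fun n => ?_)
    have hval : postProb f (contam P (Measure.dirac (ψs n)) ε) A = g (w n) := by
      rw [RBaux_postProb_dirac hf hf0 hfC P ⟨hε0, hε1⟩ hA,
        Set.indicator_of_notMem (hψs n), hfψs n, mul_zero, add_zero]
    calc lowerPost f P ε A
        ≤ postProb f (contam P (Measure.dirac (ψs n)) ε) A :=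
          ciInf_le (RBaux_bddBelow_range hf hf0 hfC P hm ⟨hε0, hε1⟩ A)
            (⟨Measure.dirac (ψs n), inferInstance⟩ : ProbabilityMeasure Ω)
      _ = g (w n) := hval
  · -- each contamination posterior is at least the formula value
    set u := ∫ ψ in A, f ψ ∂(Q : Measure Ω) with hudef
    set w := ∫ ψ in Aᶜ, f ψ ∂(Q : Measure Ω) with hwdef
    have hu0 : 0 ≤ u := integral_nonneg fun ψ => hf0 ψ
    have hw0 : 0 ≤ w := integral_nonneg fun ψ => hf0 ψ
    have hvsplit : ∫ ψ, f ψ ∂(Q : Measure Ω) = u + w :=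
      (integral_add_compl hA (RBaux_integrable hf hf0 hfC _)).symm
    have hwt : w ≤ t := RBaux_setIntegral_le_sSup hf hf0 hfC _ hA.compl
    have hut : u ≤ sSup (f '' A) := RBaux_setIntegral_le_sSup hf hf0 hfC _ hA
    have hdenQ : 0 < (1-ε) * m + ε * (u + w) := by nlinarith
    rw [postProb, RBaux_setIntegral_contam hf hf0 hfC _ _ hε0.le hε1.le,
      RBaux_integral_contam hf hf0 hfC _ _ hε0.le hε1.le, ← hmdef, ← hadef, ← hudef, hvsplit,
      div_le_div_iff₀ hden hdenQ]
    have e1 : (0:ℝ) ≤ ε * (1-ε) * (a * (t - w)) :=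
      mul_nonneg (mul_nonneg hε0.le (by linarith)) (mul_nonneg ha0 (sub_nonneg.2 hwt))
    have e2 : (0:ℝ) ≤ ε * (1-ε) * (u * (m - a)) :=
      mul_nonneg (mul_nonneg hε0.le (by linarith)) (mul_nonneg hu0 (sub_nonneg.2 ham))
    have e3 : (0:ℝ) ≤ ε * ε * (u * t) :=
      mul_nonneg (mul_nonneg hε0.le hε0.le) (mul_nonneg hu0 ht0)
    nlinarith [e1, e2, e3]
end RBlow

lemma RBaux_final_algebra {m s aA tA aB tB ε : ℝ}
    (hε0 : 0 < ε) (hε1 : ε < 1) (hm : 0 < m)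
    (haB0 : 0 ≤ aB) (haBA : aB ≤ aA) (haAm : aA ≤ m)
    (htB0 : 0 ≤ tB) (htBA : tB ≤ tA) (htAs : tA ≤ s) :
    ((1-ε)*aB + ε*tB)/((1-ε)*m + ε*tB) - (1-ε)*aB/((1-ε)*m + ε*s)
      ≤ ((1-ε)*aA + ε*tA)/((1-ε)*m + ε*tA) - (1-ε)*aA/((1-ε)*m + ε*s) := by
  have htA0 : 0 ≤ tA := htB0.trans htBA
  have hs0 : 0 ≤ s := htA0.trans htAs
  have hd0 : 0 < (1-ε)*m + ε*tB := by nlinarith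
  have hd1 : 0 < (1-ε)*m + ε*tA := by nlinarith
  have hD2 : 0 < (1-ε)*m + ε*s := by nlinarith
  have hd1D2 : (1-ε)*m + ε*tA ≤ (1-ε)*m + ε*s := by nlinarith
  -- step 1: increase tB to tA in the first term
  have h1 : ((1-ε)*aB + ε*tB)/((1-ε)*m + ε*tB) ≤ ((1-ε)*aB + ε*tA)/((1-ε)*m + ε*tA) := by
    rw [div_le_div_iff₀ hd0 hd1]
    have e : (0:ℝ) ≤ ε * (1-ε) * ((tA - tB) * (m - aB)) :=
      mul_nonneg (mul_nonneg hε0.le (by linarith))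
        (mul_nonneg (sub_nonneg.2 htBA) (sub_nonneg.2 (haBA.trans haAm)))
    nlinarith [e]
  -- step 2: increase aB to aA
  have key : (1-ε)*(aA - aB)/((1-ε)*m + ε*s) ≤ (1-ε)*(aA - aB)/((1-ε)*m + ε*tA) :=
    div_le_div_of_nonneg_left (by nlinarith) hd1 hd1D2
  have e1 : ((1-ε)*aA + ε*tA)/((1-ε)*m + ε*tA) - ((1-ε)*aB + ε*tA)/((1-ε)*m + ε*tA)
      = (1-ε)*(aA - aB)/((1-ε)*m + ε*tA) := by
    rw [div_sub_div_same]; ring_nf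
  have e2 : (1-ε)*aA/((1-ε)*m + ε*s) - (1-ε)*aB/((1-ε)*m + ε*s)
      = (1-ε)*(aA - aB)/((1-ε)*m + ε*s) := by
    rw [div_sub_div_same]; ring_nf
  linarith [h1, key, e1, e2]

lemma RBaux_strict_sublevel {f : Ω → ℝ}
    (hf : Measurable f) (hf0 : ∀ ψ, 0 ≤ f ψ) {C : ℝ} (hfC : ∀ ψ, f ψ ≤ C)
    (P : Measure Ω) [IsFiniteMeasure P] {κ L : ℝ} (hκ : 0 < κ) (hL : 0 ≤ L)
    (h : ∀ n : ℕ, ∫ ψ in {x | f x ≤ κ - κ/(n+1)}, f ψ ∂P ≤ L) :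
    ∫ ψ in {x | f x < κ}, f ψ ∂P ≤ L := by
  classical
  set ν := P.withDensity (fun ψ => ENNReal.ofReal (f ψ)) with hν
  have a_eq : ∀ S : Set Ω, MeasurableSet S → ∫ ψ in S, f ψ ∂P = (ν S).toReal := by
    intro S hS
    rw [hν, withDensity_apply _ hS,
      integral_eq_lintegral_of_nonneg_ae (Eventually.of_forall hf0)
        hf.aestronglyMeasurable.restrict]
  have hν_ne_top : ∀ S : Set Ω, ν S ≠ ⊤ := by
    intro S
    have h1 : ν S ≤ ν univ := measure_mono (subset_univ S)
    have h2 : ν univ = ∫⁻ ψ, ENNReal.ofReal (f ψ) ∂P := by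
      rw [hν, withDensity_apply _ MeasurableSet.univ, Measure.restrict_univ]
    have h3 : ∫⁻ ψ, ENNReal.ofReal (f ψ) ∂P ≤ ENNReal.ofReal C * P univ := by
      calc ∫⁻ ψ, ENNReal.ofReal (f ψ) ∂P ≤ ∫⁻ _, ENNReal.ofReal C ∂P :=
            lintegral_mono fun ψ => ENNReal.ofReal_le_ofReal (hfC ψ)
        _ = ENNReal.ofReal C * P univ := lintegral_const _
    exact ne_top_of_le_ne_top (ENNReal.mul_ne_top ENNReal.ofReal_ne_top (measure_ne_top P univ))
      (h1.trans_eq h2 |>.trans h3)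
  set S : ℕ → Set Ω := fun n => {x | f x ≤ κ - κ/(n+1)} with hS
  have hSmeas : ∀ n, MeasurableSet (S n) := fun n => hf measurableSet_Iic
  have hSmono : Monotone S := by
    intro n m hnm x hx
    have h1 : κ/(m+1) ≤ κ/(n+1) := by
      apply div_le_div_of_nonneg_left hκ.le (by positivity)
      exact_mod_cast by omega
    have hx' : f x ≤ κ - κ/(n+1) := hx
    show f x ≤ κ - κ/(m+1)
    linarith
  have hSunion : ⋃ n, S n = {x | f x < κ} := by
    ext x
    simp only [mem_iUnion, mem_setOf_eq, hS]
    constructor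
    · rintro ⟨n, hn⟩
      have : (0:ℝ) < κ/(n+1) := by positivity
      linarith
    · intro hx
      set d := κ - f x with hd
      have hd0 : 0 < d := by linarith
      obtain ⟨n, hn⟩ := exists_nat_ge (κ/d)
      refine ⟨n, ?_⟩
      have h1 : κ ≤ d * (n+1) := by
        have : κ/d ≤ (n:ℝ) + 1 := by linarith
        calc κ = (κ/d) * d := by field_simp
          _ ≤ ((n:ℝ)+1) * d := by nlinarith
          _ = d * (n+1) := by ring
      have h2 : κ/(n+1) ≤ d := by
        rw [div_le_iff₀ (by positivity)]
        linarith
      linarith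
  have htend : Filter.Tendsto (fun n => ν (S n)) Filter.atTop (nhds (ν (⋃ n, S n))) :=
    tendsto_measure_iUnion_atTop hSmono
  have hbound : ν (⋃ n, S n) ≤ ENNReal.ofReal L := by
    refine le_of_tendsto htend (Filter.Eventually.of_forall fun n => ?_)
    have h1 : (ν (S n)).toReal ≤ L := by
      rw [← a_eq _ (hSmeas n)]
      exact h n
    exact (ENNReal.le_ofReal_iff_toReal_le (hν_ne_top _) hL).2 h1
  rw [a_eq {x | f x < κ} (hf measurableSet_Iio), ← hSunion]
  exact ENNReal.toReal_le_of_le_ofReal hL hbound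

end

/-- Proposition 1 (ii): among all measurable sets `A` with `Π(A|x) ≥ γ*(x)` and
`r(Aᶜ) = r(Ψ)`, the complement `(C_{1−γ*(x)})ᶜ` of the `(1−γ*(x))`-relative belief
credible region minimizes `δ`. -/
theorem credRegion_compl_min_delta
    (f : Ω → ℝ) (hf : Measurable f) (hf0 : ∀ ψ, 0 ≤ f ψ)
    (C : ℝ) (hfC : ∀ ψ, f ψ ≤ C)
    (P : Measure Ω) [IsProbabilityMeasure P]
    (hm : 0 < ∫ ψ, f ψ ∂P)
    (ε : ℝ) (hε : ε ∈ Set.Ioo (0 : ℝ) 1)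
    (γ : ℝ) (hγ : γ ∈ Set.Ioo (0 : ℝ) 1)
    (hγs : 1 - postProb f P (credRegion f P γ) ∈ Set.Ioo (0 : ℝ) 1)
    (hC : rSup f P (credRegion f P (1 - postProb f P (credRegion f P γ)))
            = rSup f P Set.univ)
    (A : Set Ω) (hA : MeasurableSet A)
    (hA1 : postProb f P (credRegion f P γ) ≤ postProb f P A)
    (hA2 : rSup f P Aᶜ = rSup f P Set.univ) :
    deltaPost f P ε (credRegion f P (1 - postProb f P (credRegion f P γ)))ᶜ
      ≤ deltaPost f P ε A := by
  classical
  obtain ⟨hε0, hε1⟩ := hε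
  have hne : Nonempty Ω := RBaux_nonempty P hm
  obtain ⟨ψ₀⟩ := hne
  have hint : Integrable f P := RBaux_integrable hf hf0 hfC P
  set m := ∫ ψ, f ψ ∂P with hmdef
  set gs := postProb f P (credRegion f P γ) with hgsdef
  obtain ⟨hγs1, hγs2⟩ := hγs
  have hgs0 : 0 < gs := by linarith
  have hgs1 : gs < 1 := by linarith
  set c := cGamma f P (1 - gs) with hcdef
  set Cs := credRegion f P (1 - gs) with hCsdef
  have hCs_mem : ∀ ψ : Ω, ψ ∈ Cs ↔ c ≤ f ψ / m := fun ψ => Iff.rfl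
  have hCs_meas : MeasurableSet Cs := by
    have h : Cs = {ψ | c ≤ f ψ / m} := rfl
    rw [h]
    exact measurableSet_le measurable_const (hf.div_const m)
  -- facts about the defining set for c
  set T := {k : ℝ | 0 ≤ k ∧ 1 - (1 - gs) ≤ postProb f P {ψ | RBr f P ψ ≤ k}} with hTdef
  have hcT : c = sInf T := rfl
  have hmemT : ∀ k : ℝ, 0 ≤ k → gs ≤ postProb f P {ψ | RBr f P ψ ≤ k} → k ∈ T := by
    intro k hk1 hk2
    exact ⟨hk1, by linarith⟩
  have hC0 : (0:ℝ) ≤ C := (hf0 ψ₀).trans (hfC ψ₀)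
  have hTne : C/m ∈ T := by
    refine hmemT _ (div_nonneg hC0 hm.le) ?_
    have huniv : {ψ | RBr f P ψ ≤ C/m} = univ := by
      refine eq_univ_of_forall fun ψ => ?_
      show f ψ / m ≤ C / m
      exact div_le_div_of_nonneg_right (hfC ψ) hm.le
    rw [huniv, postProb, Measure.restrict_univ, ← hmdef, div_self hm.ne']
    exact hgs1.le
  have hbddT : BddBelow T := ⟨0, fun k hk => hk.1⟩
  have hc0 : 0 ≤ c := by
    rw [hcT]
    exact le_csInf ⟨C/m, hTne⟩ fun k hk => hk.1
  have hlt : ∀ k : ℝ, 0 ≤ k → k < c → postProb f P {ψ | RBr f P ψ ≤ k} < gs := by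
    intro k hk1 hk2
    by_contra hcon
    push_neg at hcon
    have : k ∈ T := hmemT k hk1 hcon
    have := csInf_le hbddT this
    rw [← hcT] at this
    linarith
  -- basic quantities
  set s := sSup (f '' univ) with hsdef
  have hfs : ∀ ψ : Ω, f ψ ≤ s := fun ψ => RBaux_le_sSup hfC (mem_univ ψ)
  have hs_m : m ≤ s := by
    have h1 : ∫ ψ, f ψ ∂P ≤ ∫ _, s ∂P := integral_mono hint (integrable_const s) hfs
    have h2 : ∫ _ : Ω, s ∂P = s := by simp
    rw [hmdef]
    linarith
  have hs0 : 0 < s := lt_of_lt_of_le hm hs_m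
  -- translating the hypotheses
  have htAc : sSup (f '' Aᶜ) = s := by
    have h := hA2
    rw [rSup, rSup, ← hmdef, ← hsdef, div_eq_div_iff hm.ne' hm.ne'] at h
    exact mul_right_cancel₀ hm.ne' h
  have htCs : sSup (f '' Cs) = s := by
    have h := hC
    rw [rSup, rSup, ← hmdef, ← hsdef, div_eq_div_iff hm.ne' hm.ne'] at h
    exact mul_right_cancel₀ hm.ne' h
  have haA : gs * m ≤ ∫ ψ in A, f ψ ∂P := by
    have h := hA1
    rw [postProb, ← hmdef, le_div_iff₀ hm] at h
    exact h
  have hCs_ne : Cs.Nonempty := by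
    by_contra h
    rw [not_nonempty_iff_eq_empty] at h
    rw [h, image_empty, Real.sSup_empty] at htCs
    linarith
  have hAc_ne : Aᶜ.Nonempty := by
    by_contra h
    rw [not_nonempty_iff_eq_empty] at h
    rw [h, image_empty, Real.sSup_empty] at htAc
    linarith
  have hA_ne : A.Nonempty := by
    by_contra h
    rw [not_nonempty_iff_eq_empty] at h
    rw [h, Measure.restrict_empty, integral_zero_measure] at haA
    nlinarith
  -- sup bounds
  have htB : sSup (f '' Csᶜ) ≤ c * m := by
    refine Real.sSup_le ?_ (mul_nonneg hc0 hm.le)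
    rintro x ⟨ψ, hψ, rfl⟩
    have h1 : ¬ c ≤ f ψ / m := hψ
    have h2 : f ψ / m < c := lt_of_not_ge h1
    rw [div_lt_iff₀ hm] at h2
    exact h2.le
  have htA : c * m ≤ sSup (f '' A) := by
    set tA := sSup (f '' A) with htAdef
    have htA0 : 0 ≤ tA := RBaux_sSup_nonneg hf0 A
    have hsub : A ⊆ {ψ | RBr f P ψ ≤ tA / m} := by
      intro ψ hψ
      show f ψ / m ≤ tA / m
      exact div_le_div_of_nonneg_right (RBaux_le_sSup hfC hψ) hm.le
    have hmono : ∫ ψ in A, f ψ ∂P ≤ ∫ ψ in {ψ | RBr f P ψ ≤ tA / m}, f ψ ∂P := by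
      refine setIntegral_mono_set hint.integrableOn
        (Filter.Eventually.of_forall fun ψ => hf0 ψ) (Filter.Eventually.of_forall hsub)
    have hpost : gs ≤ postProb f P {ψ | RBr f P ψ ≤ tA / m} := by
      rw [postProb, ← hmdef, le_div_iff₀ hm]
      linarith
    have : tA / m ∈ T := hmemT _ (div_nonneg htA0 hm.le) hpost
    have h2 := csInf_le hbddT this
    rw [← hcT] at h2
    calc c * m ≤ (tA / m) * m := by nlinarith
      _ = tA := by field_simp
  -- posterior mass of Csᶜ is at most gs * m
  have haB : ∫ ψ in Csᶜ, f ψ ∂P ≤ gs * m := by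
    have hset : Csᶜ = {ψ | f ψ < c * m} := by
      ext ψ
      simp only [mem_compl_iff, mem_setOf_eq]
      rw [hCs_mem ψ, not_le, div_lt_iff₀ hm]
    rcases eq_or_lt_of_le hc0 with hc0' | hcpos
    · have hempty : Csᶜ = (∅ : Set Ω) := by
        rw [hset]
        refine eq_empty_of_forall_notMem fun ψ hψ => ?_
        have : f ψ < 0 * m := by rw [hc0']; exact hψ
        nlinarith [hf0 ψ]
      rw [hempty, Measure.restrict_empty, integral_zero_measure]
      positivity
    · rw [hset]
      refine RBaux_strict_sublevel hf hf0 hfC P (mul_pos hcpos hm) (by positivity) ?_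
      intro n
      set k := c - c/(n+1) with hkdef
      have hn1 : (0:ℝ) < (n:ℝ) + 1 := by positivity
      have hk0 : 0 ≤ k := by
        have h1 : (1:ℝ) ≤ (n:ℝ) + 1 := by have := Nat.cast_nonneg (α := ℝ) n; linarith
        have : c/((n:ℝ)+1) ≤ c := div_le_self hcpos.le h1
        rw [hkdef]; linarith
      have hkc : k < c := by
        have : (0:ℝ) < c/((n:ℝ)+1) := by positivity
        rw [hkdef]; linarith
      have hseteq : {x : Ω | f x ≤ c*m - c*m/((n:ℝ)+1)} = {ψ | RBr f P ψ ≤ k} := by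
        ext ψ
        simp only [mem_setOf_eq]
        have hrw : c*m - c*m/((n:ℝ)+1) = k * m := by
          rw [hkdef]; field_simp
        rw [hrw]
        show f ψ ≤ k * m ↔ f ψ / m ≤ k
        rw [div_le_iff₀ hm]
      rw [hseteq]
      have := hlt k hk0 hkc
      rw [postProb, ← hmdef, div_lt_iff₀ hm] at this
      exact this.le
  -- assemble
  have hBmeas : MeasurableSet Csᶜ := hCs_meas.compl
  have haB0 : 0 ≤ ∫ ψ in Csᶜ, f ψ ∂P := integral_nonneg fun ψ => hf0 ψ
  have haAm : ∫ ψ in A, f ψ ∂P ≤ m := by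
    rw [hmdef]
    exact setIntegral_le_integral hint (Filter.Eventually.of_forall hf0)
  have htB0 : 0 ≤ sSup (f '' Csᶜ) := RBaux_sSup_nonneg hf0 _
  have htAs : sSup (f '' A) ≤ s := by
    rw [hsdef]
    exact csSup_le_csSup (RBaux_bddAbove_image hfC univ) (hA_ne.image f)
      (image_mono (subset_univ A))
  have hupB := RBaux_upper_formula hf hf0 hfC P hm ⟨hε0, hε1⟩ hBmeas
  have hloB := RBaux_lower_formula hf hf0 hfC P hm ⟨hε0, hε1⟩ hBmeas
    (by rw [compl_compl]; exact hCs_ne)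
  have hupA := RBaux_upper_formula hf hf0 hfC P hm ⟨hε0, hε1⟩ hA
  have hloA := RBaux_lower_formula hf hf0 hfC P hm ⟨hε0, hε1⟩ hA hAc_ne
  rw [compl_compl, htCs] at hloB
  rw [htAc] at hloA
  rw [deltaPost, deltaPost, hupB, hloB, hupA, hloA, ← hmdef]
  exact RBaux_final_algebra hε0 hε1 hm haB0 (le_trans haB haA) haAm htB0
    (le_trans htB htA) htAs
end

section
/- (Proposition 1(iii)) Fix ε ∈ (0,1) and γ ∈ [1/2,1), and assume the exact posterior content satisfies γ*(x) = γ and that r(C_γ) = r(C_{1−γ}) = r(Ψ). Then among all measurable sets A ⊆ Ψ with Π(A|x) = γ, the γ-relative belief credible region C_γ minimizes δ: for every such A, δ(C_γ) ≤ δ(A). -/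
open MeasureTheory Set

variable {Ω : Type*} [MeasurableSpace Ω]

section Helpers
open scoped ENNReal

variable {f : Ω → ℝ} {C : ℝ}

lemma bddAbove_image_my (hfC : ∀ ψ, f ψ ≤ C) (A : Set Ω) : BddAbove (f '' A) :=
  ⟨C, by rintro y ⟨ψ, -, rfl⟩; exact hfC ψ⟩

lemma sSup_image_nonneg_my (hf0 : ∀ ψ, 0 ≤ f ψ) (A : Set Ω) : 0 ≤ sSup (f '' A) :=
  Real.sSup_nonneg (by rintro y ⟨ψ, -, rfl⟩; exact hf0 ψ)

lemma intg_my (hf : Measurable f) (hf0 : ∀ ψ, 0 ≤ f ψ) (hfC : ∀ ψ, f ψ ≤ C)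
    (μ : Measure Ω) [IsFiniteMeasure μ] : Integrable f μ :=
  (integrable_const C).mono' hf.aestronglyMeasurable
    (ae_of_all _ fun ψ => by rw [Real.norm_eq_abs, abs_of_nonneg (hf0 ψ)]; exact hfC ψ)

lemma setIntegral_contam_my (hf : Measurable f) (hf0 : ∀ ψ, 0 ≤ f ψ) (hfC : ∀ ψ, f ψ ≤ C)
    (P Q : Measure Ω) [IsFiniteMeasure P] [IsFiniteMeasure Q] {ε : ℝ}
    (hε0 : 0 ≤ ε) (hε1 : ε ≤ 1) (A : Set Ω) :
    ∫ ψ in A, f ψ ∂(contam P Q ε) =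
      (1 - ε) * ∫ ψ in A, f ψ ∂P + ε * ∫ ψ in A, f ψ ∂Q := by
  have hP := (intg_my hf hf0 hfC P).restrict (s := A)
  have hQ := (intg_my hf hf0 hfC Q).restrict (s := A)
  rw [contam, Measure.restrict_add, Measure.restrict_smul, Measure.restrict_smul,
    integral_add_measure (hP.smul_measure ENNReal.ofReal_ne_top)
      (hQ.smul_measure ENNReal.ofReal_ne_top),
    integral_smul_measure, integral_smul_measure,
    ENNReal.toReal_ofReal (by linarith), ENNReal.toReal_ofReal hε0, smul_eq_mul, smul_eq_mul]

lemma integral_contam_my (hf : Measurable f) (hf0 : ∀ ψ, 0 ≤ f ψ) (hfC : ∀ ψ, f ψ ≤ C)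
    (P Q : Measure Ω) [IsFiniteMeasure P] [IsFiniteMeasure Q] {ε : ℝ}
    (hε0 : 0 ≤ ε) (hε1 : ε ≤ 1) :
    ∫ ψ, f ψ ∂(contam P Q ε) = (1 - ε) * ∫ ψ, f ψ ∂P + ε * ∫ ψ, f ψ ∂Q := by
  have h := setIntegral_contam_my hf hf0 hfC P Q hε0 hε1 univ
  simpa [setIntegral_univ] using h

lemma setIntegral_le_sSup_my (hf : Measurable f) (hf0 : ∀ ψ, 0 ≤ f ψ) (hfC : ∀ ψ, f ψ ≤ C)
    (Q : Measure Ω) [IsProbabilityMeasure Q] {A : Set Ω} (hA : MeasurableSet A) :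
    ∫ ψ in A, f ψ ∂Q ≤ sSup (f '' A) := by
  have hbdd := bddAbove_image_my hfC A
  have hS0 := sSup_image_nonneg_my hf0 A
  calc ∫ ψ in A, f ψ ∂Q ≤ ∫ _ψ in A, sSup (f '' A) ∂Q := by
        refine setIntegral_mono_on ((intg_my hf hf0 hfC Q).restrict) (integrable_const _) hA
          (fun ψ hψ => le_csSup hbdd ⟨ψ, hψ, rfl⟩)
    _ = (Q A).toReal * sSup (f '' A) := by rw [setIntegral_const, smul_eq_mul]; rfl
    _ ≤ sSup (f '' A) := by
        refine mul_le_of_le_one_left hS0 ?_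
        have : (Q A).toReal ≤ (1 : ℝ≥0∞).toReal :=
          ENNReal.toReal_mono (by simp) prob_le_one
        simpa using this

end Helpers

section Closed

variable {f : Ω → ℝ} {C : ℝ}

lemma postProb_contam_my (hf : Measurable f) (hf0 : ∀ ψ, 0 ≤ f ψ) (hfC : ∀ ψ, f ψ ≤ C)
    (P Q : Measure Ω) [IsProbabilityMeasure P] [IsProbabilityMeasure Q] {ε : ℝ}
    (hε0 : 0 ≤ ε) (hε1 : ε ≤ 1) (A : Set Ω) :
    postProb f (contam P Q ε) A =
      ((1 - ε) * ∫ ψ in A, f ψ ∂P + ε * ∫ ψ in A, f ψ ∂Q) /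
        ((1 - ε) * ∫ ψ, f ψ ∂P + ε * ∫ ψ, f ψ ∂Q) := by
  rw [postProb, setIntegral_contam_my hf hf0 hfC P Q hε0 hε1,
    integral_contam_my hf hf0 hfC P Q hε0 hε1]

lemma upperPost_eq_my (hf : Measurable f) (hf0 : ∀ ψ, 0 ≤ f ψ) (hfC : ∀ ψ, f ψ ≤ C)
    (P : Measure Ω) [IsProbabilityMeasure P] (hm : 0 < ∫ ψ, f ψ ∂P)
    {ε : ℝ} (hε0 : 0 < ε) (hε1 : ε < 1) {A : Set Ω} (hA : MeasurableSet A) :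
    upperPost f P ε A =
      ((1 - ε) * ∫ ψ in A, f ψ ∂P + ε * sSup (f '' A)) /
        ((1 - ε) * ∫ ψ, f ψ ∂P + ε * sSup (f '' A)) := by
  classical
  rw [upperPost]
  set m := ∫ ψ, f ψ ∂P with hmdef
  set I := ∫ ψ in A, f ψ ∂P with hIdef
  set S := sSup (f '' A) with hSdef
  have hbdd := bddAbove_image_my hfC A
  have hS0 : 0 ≤ S := sSup_image_nonneg_my hf0 A
  have hI0 : 0 ≤ I := setIntegral_nonneg hA (fun ψ _ => hf0 ψ)
  have hIm : I ≤ m := setIntegral_le_integral (intg_my hf hf0 hfC P) (ae_of_all _ hf0)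
  have hden : ∀ x : ℝ, 0 ≤ x → 0 < (1 - ε) * m + ε * x := fun x hx => by nlinarith
  -- value of the posterior for a given Q
  have hval : ∀ Q : ProbabilityMeasure Ω,
      postProb f (contam P (Q : Measure Ω) ε) A =
        ((1 - ε) * I + ε * ∫ ψ in A, f ψ ∂(Q : Measure Ω)) /
          ((1 - ε) * m + ε * ∫ ψ, f ψ ∂(Q : Measure Ω)) := fun Q =>
    postProb_contam_my hf hf0 hfC P Q hε0.le hε1.le A
  have hub : ∀ Q : ProbabilityMeasure Ω,
      postProb f (contam P (Q : Measure Ω) ε) A ≤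
        ((1 - ε) * I + ε * S) / ((1 - ε) * m + ε * S) := by
    intro Q
    rw [hval Q]
    set a := ∫ ψ in A, f ψ ∂(Q : Measure Ω) with hadef
    set t := ∫ ψ, f ψ ∂(Q : Measure Ω) with htdef
    have ha0 : 0 ≤ a := setIntegral_nonneg hA (fun ψ _ => hf0 ψ)
    have hat : a ≤ t := setIntegral_le_integral (intg_my hf hf0 hfC _) (ae_of_all _ hf0)
    have haS : a ≤ S := setIntegral_le_sSup_my hf hf0 hfC _ hA
    rw [div_le_div_iff₀ (hden t (ha0.trans hat)) (hden S hS0)]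
    nlinarith [mul_nonneg (mul_nonneg hε0.le (mul_nonneg (by linarith : (0:ℝ) ≤ 1 - ε) hI0))
        (sub_nonneg.2 hat),
      mul_nonneg (mul_nonneg hε0.le (mul_nonneg (by linarith : (0:ℝ) ≤ 1 - ε) (sub_nonneg.2 hIm)))
        (sub_nonneg.2 haS),
      mul_nonneg (mul_nonneg (mul_nonneg hε0.le hε0.le) hS0) (sub_nonneg.2 hat)]
  have hnn : ∀ Q : ProbabilityMeasure Ω,
      0 ≤ postProb f (contam P (Q : Measure Ω) ε) A := by
    intro Q
    rw [hval Q]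
    have ha0 : 0 ≤ ∫ ψ in A, f ψ ∂(Q : Measure Ω) := setIntegral_nonneg hA (fun ψ _ => hf0 ψ)
    have ht0 : 0 ≤ ∫ ψ, f ψ ∂(Q : Measure Ω) := integral_nonneg hf0
    exact div_nonneg (by nlinarith) (hden _ ht0).le
  haveI : Nonempty (ProbabilityMeasure Ω) := ⟨⟨P, inferInstance⟩⟩
  have hbddr : BddAbove (Set.range fun Q : ProbabilityMeasure Ω =>
      postProb f (contam P (Q : Measure Ω) ε) A) := by
    refine ⟨((1 - ε) * I + ε * S) / ((1 - ε) * m + ε * S), ?_⟩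
    rintro y ⟨Q, rfl⟩; exact hub Q
  refine le_antisymm (ciSup_le hub) ?_
  rcases A.eq_empty_or_nonempty with rfl | ⟨ψ₀, hψ₀⟩
  · have hI : I = 0 := by simp [hIdef]
    have hS : S = 0 := by simp [hSdef, Real.sSup_empty]
    rw [hI, hS]
    simp only [mul_zero, add_zero, zero_div]
    exact le_trans (hnn (Classical.arbitrary _)) (le_ciSup hbddr (Classical.arbitrary _))
  · -- A nonempty: approach the sup with dirac measures
    set N := (1 - ε) * I with hNdef
    set D := (1 - ε) * m with hDdef
    have hND : N ≤ D := by
      rw [hNdef, hDdef]; nlinarith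
    have hN0 : 0 ≤ N := by rw [hNdef]; nlinarith
    set g : ℝ → ℝ := fun t => (N + ε * max t 0) / (D + ε * max t 0) with hgdef
    have hdg : ∀ t : ℝ, 0 < D + ε * max t 0 := fun t => by
      have := le_max_right t 0; nlinarith
    have hmono : Monotone g := by
      intro s t hst
      have h1 : max s 0 ≤ max t 0 := max_le_max hst le_rfl
      have h2 : 0 ≤ max s 0 := le_max_right _ _
      rw [hgdef]
      dsimp only
      rw [div_le_div_iff₀ (hdg s) (hdg t)]
      nlinarith [mul_nonneg hε0.le (mul_nonneg (sub_nonneg.2 h1) (sub_nonneg.2 hND))]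
    have hcont : Continuous g := by
      apply Continuous.div
      · exact continuous_const.add (continuous_const.mul ((continuous_id.max continuous_const)))
      · exact continuous_const.add (continuous_const.mul ((continuous_id.max continuous_const)))
      · exact fun t => (hdg t).ne'
    have hmap : g S = sSup (g '' (f '' A)) :=
      hmono.map_csSup_of_continuousAt (hcont.continuousAt) ⟨f ψ₀, ⟨ψ₀, hψ₀, rfl⟩⟩ hbdd
    have hgS : g S = ((1 - ε) * I + ε * S) / ((1 - ε) * m + ε * S) := by
      rw [hgdef]; dsimp only; rw [max_eq_left hS0, ← hNdef, ← hDdef]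
    rw [← hgS, hmap]
    refine Real.sSup_le ?_ (le_trans (hnn (Classical.arbitrary _)) (le_ciSup hbddr (Classical.arbitrary _)))
    rintro y ⟨x, ⟨ψ, hψ, rfl⟩, rfl⟩
    -- g (f ψ) is achieved by the dirac measure at ψ
    have hdir : postProb f (contam P (Measure.dirac ψ) ε) A = g (f ψ) := by
      rw [postProb_contam_my hf hf0 hfC P _ hε0.le hε1.le A,
        integral_dirac' f ψ hf.stronglyMeasurable, setIntegral_dirac' hf.stronglyMeasurable ψ hA,
        if_pos hψ, hgdef]
      dsimp only
      rw [max_eq_left (hf0 ψ), ← hNdef, ← hDdef]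
    calc g (f ψ) = postProb f (contam P ((⟨Measure.dirac ψ, inferInstance⟩ :
            ProbabilityMeasure Ω) : Measure Ω) ε) A := hdir.symm
      _ ≤ _ := le_ciSup hbddr _

end Closed

section Closed2

variable {f : Ω → ℝ} {C : ℝ}

lemma lowerPost_eq_my (hf : Measurable f) (hf0 : ∀ ψ, 0 ≤ f ψ) (hfC : ∀ ψ, f ψ ≤ C)
    (P : Measure Ω) [IsProbabilityMeasure P] (hm : 0 < ∫ ψ, f ψ ∂P)
    {ε : ℝ} (hε0 : 0 < ε) (hε1 : ε < 1) {A : Set Ω} (hA : MeasurableSet A) :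
    lowerPost f P ε A =
      ((1 - ε) * ∫ ψ in A, f ψ ∂P) /
        ((1 - ε) * ∫ ψ, f ψ ∂P + ε * sSup (f '' Aᶜ)) := by
  classical
  rw [lowerPost]
  set m := ∫ ψ, f ψ ∂P with hmdef
  set I := ∫ ψ in A, f ψ ∂P with hIdef
  set S := sSup (f '' Aᶜ) with hSdef
  have hbdd := bddAbove_image_my hfC Aᶜ
  have hS0 : 0 ≤ S := sSup_image_nonneg_my hf0 Aᶜ
  have hI0 : 0 ≤ I := setIntegral_nonneg hA (fun ψ _ => hf0 ψ)
  have hIm : I ≤ m := setIntegral_le_integral (intg_my hf hf0 hfC P) (ae_of_all _ hf0)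
  set N := (1 - ε) * I with hNdef
  set D := (1 - ε) * m with hDdef
  have hND : N ≤ D := by rw [hNdef, hDdef]; nlinarith
  have hN0 : 0 ≤ N := by rw [hNdef]; nlinarith
  have hD0 : 0 < D := by rw [hDdef]; nlinarith
  have hden : ∀ x : ℝ, 0 ≤ x → 0 < D + ε * x := fun x hx => by nlinarith
  have hval : ∀ Q : ProbabilityMeasure Ω,
      postProb f (contam P (Q : Measure Ω) ε) A =
        (N + ε * ∫ ψ in A, f ψ ∂(Q : Measure Ω)) /
          (D + ε * ∫ ψ, f ψ ∂(Q : Measure Ω)) := fun Q =>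
    postProb_contam_my hf hf0 hfC P Q hε0.le hε1.le A
  have hlb : ∀ Q : ProbabilityMeasure Ω,
      N / (D + ε * S) ≤ postProb f (contam P (Q : Measure Ω) ε) A := by
    intro Q
    rw [hval Q]
    set a := ∫ ψ in A, f ψ ∂(Q : Measure Ω) with hadef
    set b := ∫ ψ in Aᶜ, f ψ ∂(Q : Measure Ω) with hbdef
    have ha0 : 0 ≤ a := setIntegral_nonneg hA (fun ψ _ => hf0 ψ)
    have hb0 : 0 ≤ b := setIntegral_nonneg hA.compl (fun ψ _ => hf0 ψ)
    have hsplit : ∫ ψ, f ψ ∂(Q : Measure Ω) = a + b := by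
      rw [hadef, hbdef, integral_add_compl hA (intg_my hf hf0 hfC _)]
    have hbS : b ≤ S := setIntegral_le_sSup_my hf hf0 hfC _ hA.compl
    rw [hsplit, div_le_div_iff₀ (hden S hS0) (hden (a + b) (by linarith))]
    nlinarith [mul_nonneg (mul_nonneg hε0.le hN0) (sub_nonneg.2 hbS),
      mul_nonneg (mul_nonneg hε0.le (sub_nonneg.2 hND)) ha0,
      mul_nonneg (mul_nonneg (mul_nonneg hε0.le hε0.le) ha0) hS0]
  have hub1 : ∀ Q : ProbabilityMeasure Ω,
      postProb f (contam P (Q : Measure Ω) ε) A ≤ 1 := by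
    intro Q
    rw [hval Q]
    have ha0 : 0 ≤ ∫ ψ in A, f ψ ∂(Q : Measure Ω) := setIntegral_nonneg hA (fun ψ _ => hf0 ψ)
    have hat : (∫ ψ in A, f ψ ∂(Q : Measure Ω)) ≤ ∫ ψ, f ψ ∂(Q : Measure Ω) :=
      setIntegral_le_integral (intg_my hf hf0 hfC _) (ae_of_all _ hf0)
    rw [div_le_one (hden _ (ha0.trans hat))]
    nlinarith
  haveI : Nonempty (ProbabilityMeasure Ω) := ⟨⟨P, inferInstance⟩⟩
  have hbddr : BddBelow (Set.range fun Q : ProbabilityMeasure Ω =>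
      postProb f (contam P (Q : Measure Ω) ε) A) := by
    refine ⟨N / (D + ε * S), ?_⟩
    rintro y ⟨Q, rfl⟩; exact hlb Q
  refine le_antisymm ?_ (le_ciInf hlb)
  rcases Set.eq_empty_or_nonempty Aᶜ with hAc | ⟨ψ₀, hψ₀⟩
  · -- A = univ
    have hAu : A = univ := by rwa [compl_empty_iff] at hAc
    have hS : S = 0 := by rw [hSdef, hAc]; simp [Real.sSup_empty]
    have hIu : I = m := by rw [hIdef, hAu, setIntegral_univ]
    have h1 : ∀ Q : ProbabilityMeasure Ω,
        postProb f (contam P (Q : Measure Ω) ε) A = 1 := by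
      intro Q
      rw [hval Q]
      have hsplit : ∫ ψ in A, f ψ ∂(Q : Measure Ω) = ∫ ψ, f ψ ∂(Q : Measure Ω) := by
        rw [hAu, setIntegral_univ]
      have ht0 : 0 ≤ ∫ ψ, f ψ ∂(Q : Measure Ω) := integral_nonneg hf0
      rw [hsplit, hNdef, hIu, ← hDdef, div_eq_one_iff_eq (hden _ ht0).ne']
    have : (⨅ Q : ProbabilityMeasure Ω, postProb f (contam P (Q : Measure Ω) ε) A)
        = (1 : ℝ) := by
      rw [iInf_congr h1]; exact ciInf_const
    rw [this, hS, mul_zero, add_zero, hNdef, hIu, ← hDdef, div_self hD0.ne']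
  · -- Aᶜ nonempty
    set g : ℝ → ℝ := fun t => N / (D + ε * max t 0) with hgdef
    have hdg : ∀ t : ℝ, 0 < D + ε * max t 0 := fun t => by
      have := le_max_right t 0; nlinarith
    have hanti : Antitone g := by
      intro s t hst
      have h1 : max s 0 ≤ max t 0 := max_le_max hst le_rfl
      rw [hgdef]
      dsimp only
      rw [div_le_div_iff₀ (hdg t) (hdg s)]
      nlinarith [mul_nonneg (mul_nonneg hε0.le hN0) (sub_nonneg.2 h1)]
    have hcont : Continuous g := by
      apply Continuous.div continuous_const
      · exact continuous_const.add (continuous_const.mul ((continuous_id.max continuous_const)))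
      · exact fun t => (hdg t).ne'
    have hmap : g S = sInf (g '' (f '' Aᶜ)) :=
      hanti.map_csSup_of_continuousAt (hcont.continuousAt) ⟨f ψ₀, ⟨ψ₀, hψ₀, rfl⟩⟩ hbdd
    have hgS : g S = N / (D + ε * S) := by
      rw [hgdef]; dsimp only; rw [max_eq_left hS0]
    rw [← hgS, hmap]
    refine le_csInf ⟨g (f ψ₀), ⟨f ψ₀, ⟨ψ₀, hψ₀, rfl⟩, rfl⟩⟩ ?_
    rintro y ⟨x, ⟨ψ, hψ, rfl⟩, rfl⟩
    have hdir : postProb f (contam P (Measure.dirac ψ) ε) A = g (f ψ) := by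
      rw [postProb_contam_my hf hf0 hfC P _ hε0.le hε1.le A,
        integral_dirac' f ψ hf.stronglyMeasurable, setIntegral_dirac' hf.stronglyMeasurable ψ hA,
        if_neg hψ, hgdef]
      dsimp only
      rw [max_eq_left (hf0 ψ), mul_zero, add_zero, ← hNdef, ← hDdef]
    calc (⨅ Q : ProbabilityMeasure Ω, postProb f (contam P (Q : Measure Ω) ε) A)
        ≤ postProb f (contam P ((⟨Measure.dirac ψ, inferInstance⟩ :
            ProbabilityMeasure Ω) : Measure Ω) ε) A := ciInf_le hbddr _
      _ = g (f ψ) := hdir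

end Closed2

lemma key_ineq_my {m γ ε M u v w : ℝ} (hm : 0 < m) (hγ1 : 1/2 ≤ γ) (hγ2 : γ < 1)
    (hε0 : 0 < ε) (hε1 : ε < 1) (hw0 : 0 ≤ w) (hu0 : 0 ≤ u) (hv0 : 0 ≤ v)
    (hwu : w ≤ u) (hwv : w ≤ v) (huM : u ≤ M) (hvM : v ≤ M) (hmax : u = M ∨ v = M) :
    ((1-ε) * (γ*m) + ε*M) / ((1-ε)*m + ε*M) - ((1-ε)*(γ*m)) / ((1-ε)*m + ε*w)
      ≤ ((1-ε) * (γ*m) + ε*u) / ((1-ε)*m + ε*u) - ((1-ε)*(γ*m)) / ((1-ε)*m + ε*v) := by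
  set N := (1-ε)*(γ*m) with hN
  set D := (1-ε)*m with hD
  have hM0 : 0 ≤ M := hu0.trans huM
  have hD0 : 0 < D := by rw [hD]; nlinarith
  have hN0 : 0 ≤ N := by rw [hN]; nlinarith
  have hND : N ≤ D := by rw [hN, hD]; nlinarith
  have hDN : D - N ≤ N := by rw [hN, hD]; nlinarith
  have hden : ∀ x : ℝ, 0 ≤ x → 0 < D + ε * x := fun x hx => by nlinarith
  rcases hmax with h | h
  · -- u = M : compare the lower parts
    rw [← h]
    have hcomp : N / (D + ε*v) ≤ N / (D + ε*w) := by
      rw [div_le_div_iff₀ (hden v hv0) (hden w hw0)]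
      nlinarith [mul_nonneg (mul_nonneg hN0 hε0.le) (sub_nonneg.2 hwv)]
    linarith
  · -- v = M
    rw [← h]
    have huv : u ≤ v := h ▸ huM
    have hA1 : (v - u)/(D + ε*u) ≤ (v - w)/(D + ε*w) := by
      rw [div_le_div_iff₀ (hden u hu0) (hden w hw0)]
      nlinarith [mul_nonneg (sub_nonneg.2 hwu) (by nlinarith : (0:ℝ) ≤ v*ε + D)]
    have e1 : (N + ε*v) / (D + ε*v) - (N + ε*u) / (D + ε*u)
        = (ε/(D + ε*v)) * ((D - N) * ((v - u)/(D + ε*u))) := by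
      have h1 := (hden v hv0).ne'
      have h2 := (hden u hu0).ne'
      field_simp
      ring
    have e2 : N / (D + ε*w) - N / (D + ε*v)
        = (ε/(D + ε*v)) * (N * ((v - w)/(D + ε*w))) := by
      have h1 := (hden v hv0).ne'
      have h2 := (hden w hw0).ne'
      field_simp
      ring
    have hchain : (D - N) * ((v - u)/(D + ε*u)) ≤ N * ((v - w)/(D + ε*w)) :=
      mul_le_mul hDN hA1 (div_nonneg (by linarith) (hden u hu0).le) hN0
    have hfac : 0 ≤ ε/(D + ε*v) := div_nonneg hε0.le (hden v hv0).le
    have hfin := mul_le_mul_of_nonneg_left hchain hfac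
    rw [← e1, ← e2] at hfin
    linarith

/-- Proposition 1 (iii): if `γ*(x) = γ ≥ 1/2`, then among all measurable sets `A` with
`Π(A|x) = γ`, the γ-relative belief credible region `C_γ` minimizes `δ`. -/
theorem credRegion_min_delta_exact_content
    (f : Ω → ℝ) (hf : Measurable f) (hf0 : ∀ ψ, 0 ≤ f ψ)
    (C : ℝ) (hfC : ∀ ψ, f ψ ≤ C)
    (P : Measure Ω) [IsProbabilityMeasure P]
    (hm : 0 < ∫ ψ, f ψ ∂P)
    (ε : ℝ) (hε : ε ∈ Set.Ioo (0 : ℝ) 1)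
    (γ : ℝ) (hγ : γ ∈ Set.Ico (1 / 2 : ℝ) 1)
    (hexact : postProb f P (credRegion f P γ) = γ)
    (hC1 : rSup f P (credRegion f P γ) = rSup f P Set.univ)
    (hC2 : rSup f P (credRegion f P (1 - γ)) = rSup f P Set.univ)
    (A : Set Ω) (hA : MeasurableSet A)
    (hA1 : postProb f P A = γ) :
    deltaPost f P ε (credRegion f P γ) ≤ deltaPost f P ε A := by
  obtain ⟨hε0, hε1⟩ := hε
  obtain ⟨hγ1, hγ2⟩ := hγ
  set m := ∫ ψ, f ψ ∂P with hmdef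
  have hΩ : Nonempty Ω := by
    by_contra hempty
    rw [not_nonempty_iff] at hempty
    have h1 : P univ = 1 := measure_univ
    rw [Set.univ_eq_empty_iff.mpr hempty] at h1
    simp at h1
  have hC0 : 0 ≤ C := (hf0 (Classical.arbitrary Ω)).trans (hfC _)
  have hRB : Measurable (RBr f P) := by unfold RBr; exact hf.div_const _
  have hCmeas : MeasurableSet (credRegion f P γ) := by
    unfold credRegion; exact measurableSet_le measurable_const hRB
  have hIA : ∫ ψ in A, f ψ ∂P = γ * m := by
    rw [postProb] at hA1; exact (div_eq_iff hm.ne').mp hA1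
  have hIC : ∫ ψ in credRegion f P γ, f ψ ∂P = γ * m := by
    rw [postProb] at hexact; exact (div_eq_iff hm.ne').mp hexact
  set M := sSup (f '' univ) with hMdef
  set u := sSup (f '' A) with hudef
  set v := sSup (f '' Aᶜ) with hvdef
  set w := sSup (f '' (credRegion f P γ)ᶜ) with hwdef
  have hsC : sSup (f '' credRegion f P γ) = M := by
    rw [rSup, rSup, div_eq_div_iff hm.ne' hm.ne'] at hC1
    exact mul_right_cancel₀ hm.ne' hC1
  have h0 : ∀ B : Set Ω, 0 ≤ sSup (f '' B) := sSup_image_nonneg_my hf0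
  have hle : ∀ B : Set Ω, sSup (f '' B) ≤ M := by
    intro B
    refine Real.sSup_le ?_ (h0 univ)
    rintro y ⟨ψ, -, rfl⟩
    exact le_csSup (bddAbove_image_my hfC univ) ⟨ψ, mem_univ _, rfl⟩
  -- cGamma is nonnegative
  set c := cGamma f P γ with hcdef
  have hmemS : C / m ∈ {k : ℝ | 0 ≤ k ∧ 1 - γ ≤ postProb f P {ψ | RBr f P ψ ≤ k}} := by
    refine ⟨div_nonneg hC0 hm.le, ?_⟩
    have huniv : {ψ | RBr f P ψ ≤ C / m} = univ := by
      refine eq_univ_of_forall fun ψ => ?_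
      show RBr f P ψ ≤ C / m
      unfold RBr
      exact (div_le_div_iff_of_pos_right hm).mpr (hfC ψ)
    rw [huniv, postProb, setIntegral_univ, ← hmdef, div_self hm.ne']
    linarith
  have hbddS : BddBelow {k : ℝ | 0 ≤ k ∧ 1 - γ ≤ postProb f P {ψ | RBr f P ψ ≤ k}} :=
    ⟨0, fun k hk => hk.1⟩
  have hc0 : 0 ≤ c := le_csInf ⟨C / m, hmemS⟩ fun k hk => hk.1
  -- c ≤ sSup (f '' B) / m for any B with posterior at least 1 - γ
  have hcle : ∀ B : Set Ω, MeasurableSet B → 1 - γ ≤ postProb f P B →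
      c ≤ sSup (f '' B) / m := by
    intro B hB hpost
    refine csInf_le hbddS ⟨div_nonneg (h0 B) hm.le, ?_⟩
    have hsub : B ⊆ {ψ | RBr f P ψ ≤ sSup (f '' B) / m} := by
      intro ψ hψ
      show RBr f P ψ ≤ sSup (f '' B) / m
      unfold RBr
      exact (div_le_div_iff_of_pos_right hm).mpr (le_csSup (bddAbove_image_my hfC B) ⟨ψ, hψ, rfl⟩)
    refine le_trans hpost ?_
    rw [postProb, postProb]
    refine (div_le_div_iff_of_pos_right hm).mpr ?_
    exact setIntegral_mono_set ((intg_my hf hf0 hfC P).restrict)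
      (Filter.Eventually.of_forall hf0) (HasSubset.Subset.eventuallyLE hsub)
  have hγhalf : 1 - γ ≤ γ := by linarith
  have hcu : c ≤ u / m := hcle A hA (by rw [hA1]; exact hγhalf)
  have hIAc : ∫ ψ in Aᶜ, f ψ ∂P = (1 - γ) * m := by
    have hsplit := integral_add_compl hA (intg_my hf hf0 hfC P)
    rw [hIA] at hsplit
    rw [← hmdef] at hsplit
    linarith
  have hcv : c ≤ v / m := by
    refine hcle Aᶜ hA.compl ?_
    rw [postProb, hIAc, ← hmdef, mul_div_assoc, div_self hm.ne', mul_one]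
  have hwc : w ≤ c * m := by
    refine Real.sSup_le ?_ (mul_nonneg hc0 hm.le)
    rintro y ⟨ψ, hψ, rfl⟩
    have hψ' : ¬ (c ≤ RBr f P ψ) := hψ
    have : RBr f P ψ < c := lt_of_not_ge hψ'
    unfold RBr at this
    exact ((div_lt_iff₀ hm).mp this).le
  have hwu : w ≤ u := hwc.trans ((le_div_iff₀ hm).mp hcu)
  have hwv : w ≤ v := hwc.trans ((le_div_iff₀ hm).mp hcv)
  have hmax : u = M ∨ v = M := by
    have hMle : M ≤ max u v := by
      refine Real.sSup_le ?_ (le_max_of_le_left (h0 A))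
      rintro y ⟨ψ, -, rfl⟩
      by_cases hψ : ψ ∈ A
      · exact le_max_of_le_left (le_csSup (bddAbove_image_my hfC A) ⟨ψ, hψ, rfl⟩)
      · exact le_max_of_le_right (le_csSup (bddAbove_image_my hfC Aᶜ) ⟨ψ, hψ, rfl⟩)
    rcases le_total u v with h | h
    · right; exact le_antisymm (hle Aᶜ) (by rwa [max_eq_right h] at hMle)
    · left; exact le_antisymm (hle A) (by rwa [max_eq_left h] at hMle)
  rw [deltaPost, deltaPost,
    upperPost_eq_my hf hf0 hfC P hm hε0 hε1 hCmeas,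
    lowerPost_eq_my hf hf0 hfC P hm hε0 hε1 hCmeas,
    upperPost_eq_my hf hf0 hfC P hm hε0 hε1 hA,
    lowerPost_eq_my hf hf0 hfC P hm hε0 hε1 hA,
    hIA, hIC, ← hmdef, hsC]
  exact key_ineq_my hm hγ1 hγ2 hε0 hε1 (h0 _) (h0 _) (h0 _) hwu hwv (hle A) (hle Aᶜ) hmax
end

section
/- (Proposition 3) Fix ψ_0 ∈ Ψ and let A_0 := {ψ : f(ψ) ≤ f(ψ_0)} (the event that RB_ε(ψ) ≤ RB_ε(ψ_0), which is the same set for every ε since RB_ε is a positive multiple of f). Then the Gâteaux derivative of the strength of the evidence at the base marginal prior Π in the direction Q exists and equals lim_{ε→0} (S_ε − S_0)/ε = (m_Q/m)(Q(A_0|x) − Π(A_0|x)), where S_ε := (∫_{A_0} f dΠ_ε)/(∫_Ψ f dΠ_ε) is the posterior probability of A_0 under Π_ε, Π(A_0|x) := (∫_{A_0} f dΠ)/m and Q(A_0|x) := (∫_{A_0} f dQ)/m_Q. -/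
open MeasureTheory Set Filter Topology

/-- Proposition 3: for `A₀ = {ψ : f(ψ) ≤ f(ψ₀)}` (the event `RB_ε(ψ) ≤ RB_ε(ψ₀)`, the
same set for every ε), the Gâteaux derivative of the strength of the evidence at the
base marginal prior `Π` in the direction `Q` exists and equals
`lim_{ε→0} (S_ε − S₀)/ε = (m_Q/m)(Q(A₀|x) − Π(A₀|x))`, where
`S_ε = (∫_{A₀} f dΠ_ε)/(∫ f dΠ_ε) = ((1−ε)∫_{A₀} f dΠ + ε∫_{A₀} f dQ)/((1−ε)m + εm_Q)`
is the posterior probability of `A₀` under `Π_ε = (1−ε)Π + εQ`. -/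
theorem gateaux_strength_marginal
    {Ω : Type*} [MeasurableSpace Ω]
    (P Q : Measure Ω) [IsProbabilityMeasure P] [IsProbabilityMeasure Q]
    (f : Ω → ℝ) (hf : Measurable f) (hf0 : ∀ ψ, 0 ≤ f ψ)
    (C : ℝ) (hfC : ∀ ψ, f ψ ≤ C)
    (hm : 0 < ∫ x, f x ∂P) (hmQ : 0 < ∫ x, f x ∂Q)
    (ψ0 : Ω) :
    Tendsto (fun ε : ℝ =>
        (((1 - ε) * (∫ x in {ψ | f ψ ≤ f ψ0}, f x ∂P) +
              ε * (∫ x in {ψ | f ψ ≤ f ψ0}, f x ∂Q)) /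
            ((1 - ε) * (∫ x, f x ∂P) + ε * (∫ x, f x ∂Q)) -
          (∫ x in {ψ | f ψ ≤ f ψ0}, f x ∂P) / ∫ x, f x ∂P) / ε)
      (𝓝[≠] 0)
      (𝓝 (((∫ x, f x ∂Q) / ∫ x, f x ∂P) *
        ((∫ x in {ψ | f ψ ≤ f ψ0}, f x ∂Q) / (∫ x, f x ∂Q) -
          (∫ x in {ψ | f ψ ≤ f ψ0}, f x ∂P) / ∫ x, f x ∂P))) := by
  set a := ∫ x in {ψ | f ψ ≤ f ψ0}, f x ∂P with ha
  set b := ∫ x in {ψ | f ψ ≤ f ψ0}, f x ∂Q with hb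
  set m := ∫ x, f x ∂P with hmdef
  set mQ := ∫ x, f x ∂Q with hmQdef
  have hm0 : m ≠ 0 := ne_of_gt hm
  have hmQ0 : mQ ≠ 0 := ne_of_gt hmQ
  -- the auxiliary function
  have key : Tendsto (fun ε : ℝ => (m * b - a * mQ) / (m * ((1 - ε) * m + ε * mQ)))
      (𝓝 0) (𝓝 ((mQ / m) * (b / mQ - a / m))) := by
    have h1 : Tendsto (fun ε : ℝ => m * ((1 - ε) * m + ε * mQ)) (𝓝 0)
        (𝓝 (m * ((1 - 0) * m + 0 * mQ))) := by
      apply Continuous.tendsto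
      continuity
    have h2 : m * ((1 - (0:ℝ)) * m + 0 * mQ) = m * m := by ring
    rw [h2] at h1
    have := (tendsto_const_nhds (x := m * b - a * mQ) (f := 𝓝 (0:ℝ))).div h1
      (by positivity)
    rw [show (mQ / m) * (b / mQ - a / m) = (m * b - a * mQ) / (m * m) by field_simp]
    exact this
  have key' : Tendsto (fun ε : ℝ => (m * b - a * mQ) / (m * ((1 - ε) * m + ε * mQ)))
      (𝓝[≠] 0) (𝓝 ((mQ / m) * (b / mQ - a / m))) :=
    key.mono_left nhdsWithin_le_nhds
  refine key'.congr' ?_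
  -- eventually the denominator (1-ε)m + ε mQ is nonzero
  have hden : ∀ᶠ ε : ℝ in 𝓝 0, (1 - ε) * m + ε * mQ ≠ 0 := by
    have hc : Continuous (fun ε : ℝ => (1 - ε) * m + ε * mQ) := by continuity
    have : Tendsto (fun ε : ℝ => (1 - ε) * m + ε * mQ) (𝓝 0)
        (𝓝 ((1 - 0) * m + 0 * mQ)) := hc.tendsto 0
    have h0 : (1 - (0:ℝ)) * m + 0 * mQ = m := by ring
    rw [h0] at this
    exact this.eventually_ne hm0
  filter_upwards [nhdsWithin_le_nhds hden, self_mem_nhdsWithin] with ε hd (hε : ε ≠ 0)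
  rw [div_sub_div _ _ hd hm0, div_div,
    div_eq_div_iff (mul_ne_zero hm0 hd) (mul_ne_zero (mul_ne_zero hd hm0) hε)]
  ring
end

section
/- (Proposition 4) For every ψ_0 ∈ Ψ, the Gâteaux derivative of the posterior density of ψ at the base marginal prior in the direction Q exists and equals lim_{ε→0} (π_ε(ψ_0|x) − π_0(ψ_0|x))/ε = (m_Q/m)(q(ψ_0|x) − π(ψ_0|x)), where π(ψ_0|x) := π(ψ_0)f(ψ_0)/m and q(ψ_0|x) := q(ψ_0)f(ψ_0)/m_Q are the posterior densities under the base and contaminating priors. -/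
open MeasureTheory Set Filter Topology

/-- Proposition 4: the Gâteaux derivative of the posterior density of ψ at the base
marginal prior in the direction `Q` exists and equals
`lim_{ε→0} (π_ε(ψ₀|x) − π₀(ψ₀|x))/ε = (m_Q/m)(q(ψ₀|x) − π(ψ₀|x))`, where
`π_ε(ψ|x) = ((1−ε)π(ψ) + εq(ψ))f(ψ)/((1−ε)m + εm_Q)`,
`π(ψ₀|x) = π(ψ₀)f(ψ₀)/m` and `q(ψ₀|x) = q(ψ₀)f(ψ₀)/m_Q`. -/
theorem gateaux_posterior_density
    {Ω : Type*} [MeasurableSpace Ω] (ν : Measure Ω) [SigmaFinite ν]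
    (p q : Ω → ℝ) (hp : Measurable p) (hq : Measurable q)
    (hp0 : ∀ ψ, 0 ≤ p ψ) (hq0 : ∀ ψ, 0 ≤ q ψ)
    (hp1 : ∫ ψ, p ψ ∂ν = 1) (hq1 : ∫ ψ, q ψ ∂ν = 1)
    (f : Ω → ℝ) (hf : Measurable f) (hf0 : ∀ ψ, 0 ≤ f ψ)
    (C : ℝ) (hfC : ∀ ψ, f ψ ≤ C)
    (hm : 0 < ∫ ψ, f ψ * p ψ ∂ν) (hmQ : 0 < ∫ ψ, f ψ * q ψ ∂ν)
    (ψ0 : Ω) :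
    Tendsto (fun ε : ℝ =>
        (((1 - ε) * p ψ0 + ε * q ψ0) * f ψ0 /
            ((1 - ε) * (∫ ψ, f ψ * p ψ ∂ν) + ε * (∫ ψ, f ψ * q ψ ∂ν)) -
          p ψ0 * f ψ0 / ∫ ψ, f ψ * p ψ ∂ν) / ε)
      (𝓝[≠] 0)
      (𝓝 (((∫ ψ, f ψ * q ψ ∂ν) / ∫ ψ, f ψ * p ψ ∂ν) *
        (q ψ0 * f ψ0 / (∫ ψ, f ψ * q ψ ∂ν) -
          p ψ0 * f ψ0 / ∫ ψ, f ψ * p ψ ∂ν))) := by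
  set m := ∫ ψ, f ψ * p ψ ∂ν with hmdef
  set mQ := ∫ ψ, f ψ * q ψ ∂ν with hmQdef
  have hm0 : m ≠ 0 := ne_of_gt hm
  have hmQ0 : mQ ≠ 0 := ne_of_gt hmQ
  have hcont : Tendsto (fun ε : ℝ => (q ψ0 * f ψ0 * m - p ψ0 * f ψ0 * mQ) /
      (((1 - ε) * m + ε * mQ) * m)) (𝓝[≠] (0:ℝ))
      (𝓝 ((mQ / m) * (q ψ0 * f ψ0 / mQ - p ψ0 * f ψ0 / m))) := by
    have h1 : Tendsto (fun ε : ℝ => (q ψ0 * f ψ0 * m - p ψ0 * f ψ0 * mQ) /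
        (((1 - ε) * m + ε * mQ) * m)) (𝓝 (0:ℝ))
        (𝓝 ((q ψ0 * f ψ0 * m - p ψ0 * f ψ0 * mQ) / (((1 - 0) * m + 0 * mQ) * m))) := by
      apply Tendsto.div tendsto_const_nhds
      · exact (((tendsto_const_nhds.sub tendsto_id).mul tendsto_const_nhds).add
          (tendsto_id.mul tendsto_const_nhds)).mul tendsto_const_nhds
      · simp [hm0]
    have heq : (q ψ0 * f ψ0 * m - p ψ0 * f ψ0 * mQ) / (((1 - 0) * m + 0 * mQ) * m)
        = (mQ / m) * (q ψ0 * f ψ0 / mQ - p ψ0 * f ψ0 / m) := by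
      field_simp
      ring
    rw [heq] at h1
    exact h1.mono_left nhdsWithin_le_nhds
  refine hcont.congr' ?_
  have hD : ∀ᶠ ε in 𝓝 (0:ℝ), (1 - ε) * m + ε * mQ ≠ 0 := by
    have : Tendsto (fun ε : ℝ => (1 - ε) * m + ε * mQ) (𝓝 0) (𝓝 ((1 - 0) * m + 0 * mQ)) :=
      ((tendsto_const_nhds.sub tendsto_id).mul tendsto_const_nhds).add
        (tendsto_id.mul tendsto_const_nhds)
    have h0 : (1 - 0) * m + 0 * mQ = m := by ring
    rw [h0] at this
    exact this.eventually_ne hm0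
  filter_upwards [nhdsWithin_le_nhds hD, self_mem_nhdsWithin] with ε hDε (hε : ε ≠ 0)
  rw [div_sub_div _ _ hDε hm0, div_div, div_eq_div_iff (mul_ne_zero hDε hm0) (mul_ne_zero (mul_ne_zero hDε hm0) hε)]
  ring
end

section
/- (Proposition 6, discrete case) Fix ψ_0 ∈ Ψ and define the strength S_ε := Π({ψ : RB_ε(ψ) ≤ RB_ε(ψ_0)} | x), where Π(A|x) := (∫_A f dΠ)/m is the base posterior. Assume the posterior distribution of RB is discrete with support containing no limit points near RB(ψ_0) and no ties interacting with RB_Q, made precise by: (a) there exists δ > 0 with Π({ψ : 0 < |RB(ψ) − RB(ψ_0)| < δ} | x) = 0, and (b) Π({ψ : RB(ψ) = RB(ψ_0) and RB_Q(ψ) ≠ RB_Q(ψ_0)} | x) = 0. Then the Gâteaux derivative of the strength at the base conditional prior in the direction Q is zero: lim_{ε→0} (S_ε − S_0)/ε = 0. -/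
open MeasureTheory Set Filter Topology

variable {Ω : Type*} [MeasurableSpace Ω]

/-- The relative belief ratio when the conditional prior is contaminated: the
conditional prior predictive is `f_ε = (1−ε)f + εg` and
`RB_ε(ψ) = f_ε(ψ)/m_ε` with `m_ε = (1−ε)m + εm_Q`. -/
noncomputable def RBc (f g : Ω → ℝ) (P : Measure Ω) (ε : ℝ) (ψ : Ω) : ℝ :=
  ((1 - ε) * f ψ + ε * g ψ) /
    ((1 - ε) * (∫ x, f x ∂P) + ε * (∫ x, g x ∂P))

/-- The strength of the evidence `S_ε = Π({ψ : RB_ε(ψ) ≤ RB_ε(ψ₀)} | x)`, computed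
with the base posterior `Π(A|x) = (∫_A f dΠ)/m`. -/
noncomputable def strength (f g : Ω → ℝ) (P : Measure Ω) (ψ0 : Ω) (ε : ℝ) : ℝ :=
  (∫ x in {ψ | RBc f g P ε ψ ≤ RBc f g P ε ψ0}, f x ∂P) / ∫ x, f x ∂P

/-- Proposition 6 (discrete case): if the posterior distribution of `RB` is discrete
near `RB(ψ₀)`, in the sense that (a) for some `δ > 0` the posterior probability of
`{ψ : 0 < |RB(ψ) − RB(ψ₀)| < δ}` is zero, and (b) the posterior probability of
`{ψ : RB(ψ) = RB(ψ₀) ∧ RB_Q(ψ) ≠ RB_Q(ψ₀)}` is zero, then the Gâteaux derivative of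
the strength at the base conditional prior in the direction `Q` is zero. -/
theorem gateaux_strength_conditional_discrete
    (P : Measure Ω) [IsProbabilityMeasure P]
    (f g : Ω → ℝ) (hf : Measurable f) (hg : Measurable g)
    (hf0 : ∀ ψ, 0 ≤ f ψ) (hg0 : ∀ ψ, 0 ≤ g ψ)
    (C : ℝ) (hfC : ∀ ψ, f ψ ≤ C) (hgC : ∀ ψ, g ψ ≤ C)
    (hm : 0 < ∫ x, f x ∂P) (hmQ : 0 < ∫ x, g x ∂P)
    (ψ0 : Ω)
    (ha : ∃ δ > (0 : ℝ),
      (∫ x in {ψ | f ψ / (∫ x, f x ∂P) ≠ f ψ0 / (∫ x, f x ∂P) ∧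
          |f ψ / (∫ x, f x ∂P) - f ψ0 / (∫ x, f x ∂P)| < δ}, f x ∂P) /
        (∫ x, f x ∂P) = 0)
    (hb : (∫ x in {ψ | f ψ / (∫ x, f x ∂P) = f ψ0 / (∫ x, f x ∂P) ∧
          g ψ / (∫ x, g x ∂P) ≠ g ψ0 / (∫ x, g x ∂P)}, f x ∂P) /
        (∫ x, f x ∂P) = 0) :
    Tendsto (fun ε : ℝ => (strength f g P ψ0 ε - strength f g P ψ0 0) / ε)
      (𝓝[≠] 0) (𝓝 0) := by
  obtain ⟨δ, hδ, haz⟩ := ha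
  set M : ℝ := ∫ x, f x ∂P with hM
  set MQ : ℝ := ∫ x, g x ∂P with hMQ
  -- integrability
  have hInt : Integrable f P :=
    (integrable_const C).mono' hf.aestronglyMeasurable
      (ae_of_all _ fun ψ => by rw [Real.norm_eq_abs, abs_of_nonneg (hf0 ψ)]; exact hfC ψ)
  have hMC : M ≤ C := by
    calc M ≤ ∫ _, C ∂P := integral_mono hInt (integrable_const C) hfC
    _ = C := by simp
  have hMQC : MQ ≤ C := by
    have hIntg : Integrable g P :=
      (integrable_const C).mono' hg.aestronglyMeasurable
        (ae_of_all _ fun ψ => by rw [Real.norm_eq_abs, abs_of_nonneg (hg0 ψ)]; exact hgC ψ)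
    calc MQ ≤ ∫ _, C ∂P := integral_mono hIntg (integrable_const C) hgC
    _ = C := by simp
  have hC : 0 < C := lt_of_lt_of_le hm hMC
  set δ' : ℝ := min δ 1 with hδ'def
  have hδ'pos : 0 < δ' := lt_min hδ one_pos
  have hδ'δ : δ' ≤ δ := min_le_left _ _
  have hδ'1 : δ' ≤ 1 := min_le_right _ _
  set η : ℝ := min (1/2) (δ' * M / (2 * C)) with hηdef
  have hηpos : 0 < η := lt_min (by norm_num) (by positivity)
  -- basic bounds for |ε| < η
  have hεbounds : ∀ ε : ℝ, |ε| < η → |ε| < 1/2 ∧ |ε| * C < δ' * M / 2 := by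
    intro ε hε
    refine ⟨lt_of_lt_of_le hε (min_le_left _ _), ?_⟩
    have h1 : |ε| < δ' * M / (2 * C) := lt_of_lt_of_le hε (min_le_right _ _)
    have := (lt_div_iff₀ (by positivity : (0:ℝ) < 2 * C)).mp h1
    nlinarith
  -- positivity of the contaminated denominator
  have hmε : ∀ ε : ℝ, |ε| < η → 0 < (1 - ε) * M + ε * MQ := by
    intro ε hε
    obtain ⟨h1, h2⟩ := hεbounds ε hε
    have h3 : -(|ε| * C) ≤ ε * MQ := by
      have h4 := neg_abs_le (ε * MQ)
      rw [abs_mul, abs_of_pos hmQ] at h4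
      have h5 : |ε| * MQ ≤ |ε| * C := mul_le_mul_of_nonneg_left hMQC (abs_nonneg ε)
      linarith
    have h6 : (1/2 : ℝ) * M ≤ (1 - ε) * M :=
      mul_le_mul_of_nonneg_right (by linarith [le_abs_self ε]) hm.le
    have h7 : δ' * M ≤ 1 * M := mul_le_mul_of_nonneg_right hδ'1 hm.le
    linarith
  -- the bad sets
  set A : Set Ω := {ψ | f ψ / M ≠ f ψ0 / M ∧ |f ψ / M - f ψ0 / M| < δ} with hAdef
  set B : Set Ω := {ψ | f ψ / M = f ψ0 / M ∧ g ψ / MQ ≠ g ψ0 / MQ} with hBdef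
  have hAm : MeasurableSet A := by
    have h1 : Measurable fun ψ => f ψ / M := hf.div_const _
    exact ((h1 (measurableSet_singleton (f ψ0 / M)).compl)).inter
      (measurableSet_lt ((h1.sub measurable_const).abs) measurable_const)
  have hBm : MeasurableSet B := by
    have h1 : Measurable fun ψ => f ψ / M := hf.div_const _
    have h2 : Measurable fun ψ => g ψ / MQ := hg.div_const _
    exact (h1 (measurableSet_singleton (f ψ0 / M))).inter
      (h2 (measurableSet_singleton (g ψ0 / MQ)).compl)
  -- null sets: f vanishes a.e. on A and B
  have hnull : ∀ (S : Set Ω), MeasurableSet S → (∫ x in S, f x ∂P) / M = 0 →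
      ∀ᵐ ψ ∂P, ψ ∈ S → f ψ = 0 := by
    intro S hS h0
    have h1 : ∫ x in S, f x ∂P = 0 := by
      rcases div_eq_zero_iff.mp h0 with h | h
      · exact h
      · exact absurd h hm.ne'
    have h2 := (setIntegral_eq_zero_iff_of_nonneg_ae
      (ae_of_all _ fun ψ => hf0 ψ) hInt.integrableOn).mp h1
    exact (ae_restrict_iff' hS).mp h2
  have hA0 : ∀ᵐ ψ ∂P, ψ ∈ A → f ψ = 0 := hnull A hAm haz
  have hB0 : ∀ᵐ ψ ∂P, ψ ∈ B → f ψ = 0 := hnull B hBm hb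
  -- membership equivalence off the bad sets
  have hiff : ∀ ε : ℝ, |ε| < η → ∀ ψ, ψ ∉ A → ψ ∉ B →
      (RBc f g P ε ψ ≤ RBc f g P ε ψ0 ↔ RBc f g P 0 ψ ≤ RBc f g P 0 ψ0) := by
    intro ε hε ψ hψA hψB
    obtain ⟨h1, h2⟩ := hεbounds ε hε
    have hpos : 0 < (1 - ε) * M + ε * MQ := hmε ε hε
    have hpos0 : 0 < (1 - (0:ℝ)) * M + (0:ℝ) * MQ := by simpa using hm
    unfold RBc
    rw [← hM, ← hMQ, div_le_div_iff_of_pos_right hpos, div_le_div_iff_of_pos_right hpos0]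
    simp only [sub_zero, one_mul, zero_mul, add_zero]
    by_cases hfe : f ψ = f ψ0
    · have hge : g ψ = g ψ0 := by
        by_contra hne
        exact hψB ⟨by rw [hfe], fun h => hne (mul_right_cancel₀ hmQ.ne'
          (by rw [div_eq_div_iff hmQ.ne' hmQ.ne'] at h; exact h))⟩
      rw [hfe, hge]
      exact iff_of_true le_rfl le_rfl
    · have hne : f ψ / M ≠ f ψ0 / M := fun h =>
        hfe (mul_right_cancel₀ hm.ne' (by rw [div_eq_div_iff hm.ne' hm.ne'] at h; exact h))
      have habs : δ ≤ |f ψ / M - f ψ0 / M| := by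
        by_contra hlt
        exact hψA ⟨hne, lt_of_not_ge hlt⟩
      have habs2 : δ * M ≤ |f ψ - f ψ0| := by
        rw [div_sub_div_same, abs_div, abs_of_pos hm, le_div_iff₀ hm] at habs
        linarith [habs]
      have habs3 : δ' * M ≤ |f ψ - f ψ0| := by
        have : δ' * M ≤ δ * M := mul_le_mul_of_nonneg_right hδ'δ hm.le
        linarith
      have hgb : |g ψ - g ψ0| ≤ C := abs_le.mpr ⟨by linarith [hg0 ψ, hgC ψ0], by linarith [hg0 ψ0, hgC ψ]⟩
      have hεg : ε * (g ψ - g ψ0) ≤ |ε| * C ∧ -(|ε| * C) ≤ ε * (g ψ - g ψ0) := by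
        constructor
        · calc ε * (g ψ - g ψ0) ≤ |ε * (g ψ - g ψ0)| := le_abs_self _
          _ = |ε| * |g ψ - g ψ0| := abs_mul _ _
          _ ≤ |ε| * C := mul_le_mul_of_nonneg_left hgb (abs_nonneg ε)
        · have := neg_abs_le (ε * (g ψ - g ψ0))
          have h5 : |ε * (g ψ - g ψ0)| ≤ |ε| * C := by
            rw [abs_mul]; exact mul_le_mul_of_nonneg_left hgb (abs_nonneg ε)
          linarith
      rcases lt_or_gt_of_ne hfe with hlt | hgt
      · -- f ψ < f ψ0 : both sides hold
        have hd : δ' * M ≤ f ψ0 - f ψ := by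
          rw [abs_sub_comm, abs_of_pos (by linarith)] at habs3; exact habs3
        have hprod : (1/2) * (δ' * M) ≤ (1 - ε) * (f ψ0 - f ψ) :=
          mul_le_mul (by linarith [le_abs_self ε]) hd (by positivity) (by linarith [le_abs_self ε])
        exact iff_of_true (by nlinarith [hεg.1]) (le_of_lt hlt)
      · -- f ψ > f ψ0 : both sides fail
        have hd : δ' * M ≤ f ψ - f ψ0 := by
          rw [abs_of_pos (by linarith)] at habs3; exact habs3
        have hprod : (1/2) * (δ' * M) ≤ (1 - ε) * (f ψ - f ψ0) :=
          mul_le_mul (by linarith [le_abs_self ε]) hd (by positivity) (by linarith [le_abs_self ε])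
        exact iff_of_false (by nlinarith [hεg.2]) (not_le.mpr hgt)
  -- measurability of the level sets
  have hSm : ∀ ε : ℝ, MeasurableSet {ψ | RBc f g P ε ψ ≤ RBc f g P ε ψ0} := by
    intro ε
    have : Measurable (RBc f g P ε) := by
      unfold RBc
      exact ((measurable_const.mul hf).add (measurable_const.mul hg)).div_const _
    exact measurableSet_le this measurable_const
  -- the strengths agree for |ε| < η
  have hstr : ∀ ε : ℝ, |ε| < η → strength f g P ψ0 ε = strength f g P ψ0 0 := by
    intro ε hε
    unfold strength
    rw [← hM]
    congr 1
    rw [← integral_indicator (hSm ε), ← integral_indicator (hSm 0)]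
    apply integral_congr_ae
    filter_upwards [hA0, hB0] with ψ h1 h2
    by_cases hmA : ψ ∈ A
    · simp only [Set.indicator_apply]; split_ifs <;> simp [h1 hmA]
    by_cases hmB : ψ ∈ B
    · simp only [Set.indicator_apply]; split_ifs <;> simp [h2 hmB]
    have hmem : ψ ∈ {ψ | RBc f g P ε ψ ≤ RBc f g P ε ψ0} ↔
        ψ ∈ {ψ | RBc f g P 0 ψ ≤ RBc f g P 0 ψ0} := hiff ε hε ψ hmA hmB
    simp only [Set.indicator_apply]
    exact if_congr hmem rfl rfl
  -- conclude
  have hev : (fun ε : ℝ => (strength f g P ψ0 ε - strength f g P ψ0 0) / ε)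
      =ᶠ[𝓝[≠] (0:ℝ)] (fun _ : ℝ => (0:ℝ)) := by
    have h1 : ∀ᶠ ε in 𝓝 (0:ℝ), |ε| < η := by
      have := Metric.ball_mem_nhds (0:ℝ) hηpos
      filter_upwards [this] with ε hε
      simpa [Real.dist_eq] using hε
    filter_upwards [eventually_nhdsWithin_of_eventually_nhds h1] with ε hε
    rw [hstr ε hε, sub_self, zero_div]
  exact Tendsto.congr' hev.symm tendsto_const_nhds
end

section
/- (Sandwich bounds in the proof of Proposition 6) Fix ψ_0 ∈ Ψ and define the strength S_ε := Π({ψ : RB_ε(ψ) ≤ RB_ε(ψ_0)} | x), where Π(A|x) := (∫_A f dΠ)/m is the base posterior. Then: for every ε ∈ (0,1) (so that ε_x ∈ (0,1)), S_ε ≤ Π({ψ : RB(ψ) ≤ RB(ψ_0) + (ε_x/(1−ε_x)) RB_Q(ψ_0)} | x); and for every ε < 0 with m_ε > 0 (so that ε_x < 0), S_ε ≥ Π({ψ : RB(ψ) ≤ RB(ψ_0) + (ε_x/(1−ε_x)) RB_Q(ψ_0)} | x). -/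
open MeasureTheory Set Filter Topology

variable {Ω : Type*} [MeasurableSpace Ω]

/-- Sandwich bounds in the proof of Proposition 6: with
`ε_x = εm_Q/m_ε ` (where `m_ε = (1−ε)m + εm_Q`), for `ε ∈ (0,1)` the strength satisfies
`S_ε ≤ Π({ψ : RB(ψ) ≤ RB(ψ₀) + (ε_x/(1−ε_x))RB_Q(ψ₀)}|x)`, while for `ε < 0` with
`m_ε > 0` the reverse inequality holds. -/
theorem strength_sandwich_bounds
    (P : Measure Ω) [IsProbabilityMeasure P]
    (f g : Ω → ℝ) (hf : Measurable f) (hg : Measurable g)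
    (hf0 : ∀ ψ, 0 ≤ f ψ) (hg0 : ∀ ψ, 0 ≤ g ψ)
    (C : ℝ) (hfC : ∀ ψ, f ψ ≤ C) (hgC : ∀ ψ, g ψ ≤ C)
    (hm : 0 < ∫ x, f x ∂P) (hmQ : 0 < ∫ x, g x ∂P)
    (ψ0 : Ω) :
    (∀ ε : ℝ, ε ∈ Set.Ioo (0 : ℝ) 1 →
      strength f g P ψ0 ε ≤
        (∫ x in {ψ | f ψ / (∫ x, f x ∂P) ≤ f ψ0 / (∫ x, f x ∂P) +
            (ε * (∫ x, g x ∂P) / ((1 - ε) * (∫ x, f x ∂P) + ε * (∫ x, g x ∂P)) /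
              (1 - ε * (∫ x, g x ∂P) /
                ((1 - ε) * (∫ x, f x ∂P) + ε * (∫ x, g x ∂P)))) *
            (g ψ0 / ∫ x, g x ∂P)}, f x ∂P) / ∫ x, f x ∂P) ∧
    (∀ ε : ℝ, ε < 0 → 0 < (1 - ε) * (∫ x, f x ∂P) + ε * (∫ x, g x ∂P) →
      (∫ x in {ψ | f ψ / (∫ x, f x ∂P) ≤ f ψ0 / (∫ x, f x ∂P) +
            (ε * (∫ x, g x ∂P) / ((1 - ε) * (∫ x, f x ∂P) + ε * (∫ x, g x ∂P)) /
              (1 - ε * (∫ x, g x ∂P) /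
                ((1 - ε) * (∫ x, f x ∂P) + ε * (∫ x, g x ∂P)))) *
            (g ψ0 / ∫ x, g x ∂P)}, f x ∂P) / (∫ x, f x ∂P) ≤
        strength f g P ψ0 ε) := by
  set m := ∫ x, f x ∂P with hm_def
  set mQ := ∫ x, g x ∂P with hmQ_def
  have hfint : Integrable f P := by
    refine (integrable_const C).mono' hf.aestronglyMeasurable ?_
    exact ae_of_all _ fun x => by
      rw [Real.norm_eq_abs, abs_of_nonneg (hf0 x)]; exact hfC x
  -- the simplified coefficient
  have hcoef : ∀ ε : ℝ, ε ≠ 1 → (1 - ε) * m + ε * mQ > 0 →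
      (ε * mQ / ((1 - ε) * m + ε * mQ) /
        (1 - ε * mQ / ((1 - ε) * m + ε * mQ))) * (g ψ0 / mQ)
      = ε * g ψ0 / ((1 - ε) * m) := by
    intro ε hε1 hmε
    have h1 : 1 - ε * mQ / ((1 - ε) * m + ε * mQ)
        = (1 - ε) * m / ((1 - ε) * m + ε * mQ) := by
      field_simp
      ring
    have h1ε : (1:ℝ) - ε ≠ 0 := sub_ne_zero_of_ne (Ne.symm hε1)
    rw [h1]
    field_simp
  -- membership equivalences
  have hmemB : ∀ ε : ℝ, (1 - ε) * m > 0 → (1 - ε) * m + ε * mQ > 0 → ∀ ψ,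
      (f ψ / m ≤ f ψ0 / m +
        (ε * mQ / ((1 - ε) * m + ε * mQ) /
          (1 - ε * mQ / ((1 - ε) * m + ε * mQ))) * (g ψ0 / mQ))
      ↔ (1 - ε) * f ψ ≤ (1 - ε) * f ψ0 + ε * g ψ0 := by
    intro ε h1εm hmε ψ
    have hε1 : ε ≠ 1 := by
      intro h; rw [h] at h1εm; simp at h1εm
    rw [hcoef ε hε1 hmε]
    have h1ε : (0:ℝ) < 1 - ε := by
      rcases lt_trichotomy (1 - ε) 0 with h | h | h
      · nlinarith
      · nlinarith
      · exact h
    rw [show f ψ0 / m + ε * g ψ0 / ((1 - ε) * m)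
          = ((1 - ε) * f ψ0 + ε * g ψ0) / ((1 - ε) * m) by
        field_simp,
      show f ψ / m = ((1 - ε) * f ψ) / ((1 - ε) * m) by
        rw [mul_div_mul_left _ _ h1ε.ne']]
    exact div_le_div_iff_of_pos_right h1εm
  have hmemA : ∀ ε : ℝ, (1 - ε) * m + ε * mQ > 0 → ∀ ψ,
      (RBc f g P ε ψ ≤ RBc f g P ε ψ0)
      ↔ (1 - ε) * f ψ + ε * g ψ ≤ (1 - ε) * f ψ0 + ε * g ψ0 := by
    intro ε hmε ψ
    unfold RBc
    rw [← hm_def, ← hmQ_def]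
    exact div_le_div_iff_of_pos_right hmε
  constructor
  · intro ε hε
    obtain ⟨hε0, hε1⟩ := hε
    have h1ε : (0:ℝ) < 1 - ε := by linarith
    have hmε : (1 - ε) * m + ε * mQ > 0 := by positivity
    have h1εm : (1 - ε) * m > 0 := by positivity
    have hsub : {ψ | RBc f g P ε ψ ≤ RBc f g P ε ψ0} ⊆
        {ψ | f ψ / m ≤ f ψ0 / m +
          (ε * mQ / ((1 - ε) * m + ε * mQ) /
            (1 - ε * mQ / ((1 - ε) * m + ε * mQ))) * (g ψ0 / mQ)} := by
      intro ψ hψ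
      rw [Set.mem_setOf_eq, hmemB ε h1εm hmε ψ]
      rw [Set.mem_setOf_eq, hmemA ε hmε ψ] at hψ
      nlinarith [hg0 ψ]
    unfold strength
    rw [← hm_def]
    refine (div_le_div_iff_of_pos_right hm).mpr ?_
    exact setIntegral_mono_set hfint.integrableOn (ae_of_all _ hf0)
      (HasSubset.Subset.eventuallyLE hsub)
  · intro ε hε0 hmε
    have h1εm : (1 - ε) * m > 0 := by nlinarith
    have hsub : {ψ | f ψ / m ≤ f ψ0 / m +
          (ε * mQ / ((1 - ε) * m + ε * mQ) /
            (1 - ε * mQ / ((1 - ε) * m + ε * mQ))) * (g ψ0 / mQ)} ⊆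
        {ψ | RBc f g P ε ψ ≤ RBc f g P ε ψ0} := by
      intro ψ hψ
      rw [Set.mem_setOf_eq, hmemA ε hmε ψ]
      rw [Set.mem_setOf_eq, hmemB ε h1εm hmε ψ] at hψ
      nlinarith [hg0 ψ]
    unfold strength
    rw [← hm_def]
    refine (div_le_div_iff_of_pos_right hm).mpr ?_
    exact setIntegral_mono_set hfint.integrableOn (ae_of_all _ hf0)
      (HasSubset.Subset.eventuallyLE hsub)
end

section
/- (Proposition 7) For every θ_0 ∈ Θ with π(θ_0) > 0, the Gâteaux derivative of the relative belief ratio at the base prior in the direction Q exists and equals lim_{ε→0} (RB_ε(θ_0) − RB(θ_0))/ε = (m_Q/m)(RB_Q(θ_0) − RB(θ_0)), where RB(θ) := L(θ)/m and RB_Q(θ) := q(θ)L(θ)/(π(θ) m_Q). -/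
open MeasureTheory Set Filter Topology

/-- Proposition 7: for a general perturbation `(1−ε)π + εq` of the full prior density,
the Gâteaux derivative of the relative belief ratio
`RB_ε(θ) = π_ε(θ|x)/π(θ) = ((1−ε)π(θ) + εq(θ))L(θ)/(((1−ε)m + εm_Q)π(θ))`
at the base prior in the direction `Q` exists and equals
`lim_{ε→0} (RB_ε(θ₀) − RB(θ₀))/ε = (m_Q/m)(RB_Q(θ₀) − RB(θ₀))`, where
`RB(θ) = L(θ)/m` and `RB_Q(θ) = q(θ)L(θ)/(π(θ)m_Q)`. -/
theorem gateaux_relative_belief_general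
    {Θ : Type*} [MeasurableSpace Θ] (ν : Measure Θ) [SigmaFinite ν]
    (p q : Θ → ℝ) (hp : Measurable p) (hq : Measurable q)
    (hp0 : ∀ θ, 0 ≤ p θ) (hq0 : ∀ θ, 0 ≤ q θ)
    (hp1 : ∫ θ, p θ ∂ν = 1) (hq1 : ∫ θ, q θ ∂ν = 1)
    (L : Θ → ℝ) (hL : Measurable L) (hL0 : ∀ θ, 0 ≤ L θ)
    (C : ℝ) (hLC : ∀ θ, L θ ≤ C)
    (hm : 0 < ∫ θ, L θ * p θ ∂ν) (hmQ : 0 < ∫ θ, L θ * q θ ∂ν)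
    (θ0 : Θ) (hθ0 : 0 < p θ0) :
    Tendsto (fun ε : ℝ =>
        (((1 - ε) * p θ0 + ε * q θ0) * L θ0 /
            (((1 - ε) * (∫ θ, L θ * p θ ∂ν) + ε * (∫ θ, L θ * q θ ∂ν)) * p θ0) -
          L θ0 / ∫ θ, L θ * p θ ∂ν) / ε)
      (𝓝[≠] 0)
      (𝓝 (((∫ θ, L θ * q θ ∂ν) / ∫ θ, L θ * p θ ∂ν) *
        (q θ0 * L θ0 / (p θ0 * ∫ θ, L θ * q θ ∂ν) -
          L θ0 / ∫ θ, L θ * p θ ∂ν))) := by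
  set m := ∫ θ, L θ * p θ ∂ν with hmdef
  set mQ := ∫ θ, L θ * q θ ∂ν with hmQdef
  set a := p θ0
  set b := q θ0
  set l := L θ0
  have hDcont : Continuous fun ε : ℝ => (1 - ε) * m + ε * mQ := by continuity
  have hD0 : ((1 : ℝ) - 0) * m + 0 * mQ = m := by ring
  have hDpos : ∀ᶠ ε in 𝓝 (0 : ℝ), 0 < (1 - ε) * m + ε * mQ := by
    have h : Tendsto (fun ε : ℝ => (1 - ε) * m + ε * mQ) (𝓝 0) (𝓝 m) := by
      simpa [hD0] using hDcont.tendsto 0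
    exact h.eventually (eventually_gt_nhds hm)
  have hg : Tendsto (fun ε : ℝ => l * (b * m - a * mQ) / (m * a * ((1 - ε) * m + ε * mQ)))
      (𝓝[≠] 0) (𝓝 (mQ / m * (b * l / (a * mQ) - l / m))) := by
    have hc : Continuous fun ε : ℝ => m * a * ((1 - ε) * m + ε * mQ) := by continuity
    have hlim : Tendsto (fun ε : ℝ => l * (b * m - a * mQ) / (m * a * ((1 - ε) * m + ε * mQ)))
        (𝓝 0) (𝓝 (l * (b * m - a * mQ) / (m * a * m))) := by
      apply Tendsto.div tendsto_const_nhds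
      · simpa [hD0] using hc.tendsto 0
      · positivity
    have heq : l * (b * m - a * mQ) / (m * a * m) = mQ / m * (b * l / (a * mQ) - l / m) := by
      field_simp
    rw [← heq]; exact hlim.mono_left nhdsWithin_le_nhds
  refine hg.congr' ?_
  filter_upwards [self_mem_nhdsWithin, nhdsWithin_le_nhds hDpos] with ε hε hD
  have hε' : ε ≠ 0 := hε
  have hD' : (1 - ε) * m + ε * mQ ≠ 0 := ne_of_gt hD
  rw [div_sub_div _ _ (mul_ne_zero hD' (ne_of_gt hθ0)) (ne_of_gt hm), div_div, div_eq_div_iff (by positivity) (mul_ne_zero (mul_ne_zero (mul_ne_zero hD' (ne_of_gt hθ0)) (ne_of_gt hm)) hε')]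
  ring
end

section
/- (Example 2, worst-case ratio for the Bernoulli model) Let n ≥ 1 and 0 ≤ t ≤ n be natural numbers and α_0, β_0 > 0. Let L(θ) := C(n,t) θ^t (1−θ)^{n−t} for θ ∈ [0,1] (with the convention 0^0 = 1), and let Π be the Beta(α_0,β_0) distribution on [0,1], i.e. the probability measure with density θ ↦ θ^{α_0−1}(1−θ)^{β_0−1} Γ(α_0+β_0)/(Γ(α_0)Γ(β_0)) with respect to Lebesgue measure on (0,1). Then the supremum, over all probability measures Q on [0,1], of (∫ L dQ)/(∫ L dΠ) equals [Γ(α_0)Γ(β_0)/Γ(α_0+β_0)] · [Γ(n+α_0+β_0)/(Γ(t+α_0)Γ(n−t+β_0))] · (t/n)^t (1 − t/n)^{n−t}. -/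
open MeasureTheory Set
open scoped NNReal ENNReal


lemma realBetaIntegral {a b : ℝ} (ha : 0 < a) (hb : 0 < b) :
    ∫ x in Ioo (0:ℝ) 1, x ^ (a - 1) * (1 - x) ^ (b - 1) =
      Real.Gamma a * Real.Gamma b / Real.Gamma (a + b) := by
  have hbeta : Complex.betaIntegral a b =
      ((∫ x in Ioo (0:ℝ) 1, x ^ (a - 1) * (1 - x) ^ (b - 1) : ℝ) : ℂ) := by
    rw [Complex.betaIntegral]
    have hcg : ∀ x ∈ uIcc (0:ℝ) 1,
        (x:ℂ) ^ ((a:ℂ) - 1) * ((1:ℂ) - x) ^ ((b:ℂ) - 1)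
          = ((x ^ (a - 1) * (1 - x) ^ (b - 1) : ℝ) : ℂ) := by
      intro x hx
      rw [uIcc_of_le zero_le_one] at hx
      rw [Complex.ofReal_mul, Complex.ofReal_cpow hx.1,
        Complex.ofReal_cpow (by linarith [hx.2] : (0:ℝ) ≤ 1 - x)]
      push_cast
      ring_nf
    rw [intervalIntegral.integral_congr hcg, intervalIntegral.integral_ofReal,
      intervalIntegral.integral_of_le zero_le_one, integral_Ioc_eq_integral_Ioo]
  have hc := Complex.Gamma_mul_Gamma_eq_betaIntegral
    (s := (a:ℂ)) (t := (b:ℂ)) (by simpa using ha) (by simpa using hb)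
  rw [hbeta, ← Complex.ofReal_add, Complex.Gamma_ofReal, Complex.Gamma_ofReal,
    Complex.Gamma_ofReal, ← Complex.ofReal_mul, ← Complex.ofReal_mul] at hc
  have h := Complex.ofReal_injective hc
  have hG : Real.Gamma (a + b) ≠ 0 := (Real.Gamma_pos_of_pos (by linarith)).ne'
  field_simp
  linarith [h]

lemma likelihood_le_max (n t : ℕ) (hn : 1 ≤ n) (ht : t ≤ n) {θ : ℝ}
    (h0 : 0 ≤ θ) (h1 : θ ≤ 1) :
    θ ^ t * (1 - θ) ^ (n - t) ≤ ((t:ℝ)/n) ^ t * (1 - (t:ℝ)/n) ^ (n - t) := by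
  have hn0 : (0:ℝ) < n := by exact_mod_cast hn
  have hcast : ((n - t : ℕ) : ℝ) = (n:ℝ) - t := Nat.cast_sub ht
  have hRnn : 0 ≤ ((t:ℝ)/n) ^ t * (1 - (t:ℝ)/n) ^ (n - t) := by
    apply mul_nonneg (pow_nonneg (by positivity) _)
    apply pow_nonneg
    rw [sub_nonneg, div_le_one hn0]
    exact_mod_cast ht
  rcases Nat.eq_zero_or_pos t with rfl | htpos
  · simp only [pow_zero, one_mul, Nat.cast_zero, zero_div, sub_zero, Nat.sub_zero, one_pow]
    exact pow_le_one₀ (by linarith : (0:ℝ) ≤ 1 - θ) (by linarith)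
  rcases eq_or_lt_of_le ht with rfl | htn
  · rw [Nat.sub_self, pow_zero, pow_zero, mul_one, mul_one, div_self hn0.ne', one_pow]
    refine pow_le_one₀ h0 h1
  set a : ℝ := (t:ℝ)/n with ha_def
  have ha0 : 0 < a := div_pos (by exact_mod_cast htpos) hn0
  have ha1 : a < 1 := (div_lt_one hn0).2 (by exact_mod_cast htn)
  have h1a0 : (0:ℝ) < 1 - a := by linarith
  rcases eq_or_lt_of_le h0 with rfl | hθ0
  · rw [zero_pow htpos.ne', zero_mul]; exact hRnn
  rcases eq_or_lt_of_le h1 with rfl | hθ1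
  · rw [show (1:ℝ) - 1 = 0 by ring, zero_pow (Nat.sub_ne_zero_of_lt htn), mul_zero]
    exact hRnn
  have key := Real.geom_mean_le_arith_mean2_weighted (w₁ := a) (w₂ := 1 - a)
    (p₁ := θ/a) (p₂ := (1-θ)/(1-a)) ha0.le h1a0.le
    (div_nonneg h0 ha0.le) (div_nonneg (by linarith) h1a0.le) (by ring)
  have key2 : a * (θ/a) + (1-a) * ((1-θ)/(1-a)) = 1 := by
    rw [mul_comm a, div_mul_cancel₀ _ ha0.ne', mul_comm (1-a), div_mul_cancel₀ _ h1a0.ne']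
    ring
  rw [key2] at key
  have keyn : ((θ/a) ^ a * ((1-θ)/(1-a)) ^ (1-a)) ^ ((n:ℝ)) ≤ 1 :=
    Real.rpow_le_one (mul_nonneg (Real.rpow_nonneg (div_nonneg h0 ha0.le) _)
      (Real.rpow_nonneg (div_nonneg (by linarith) h1a0.le) _)) key (Nat.cast_nonneg n)
  have hexp : ((θ/a) ^ a * ((1-θ)/(1-a)) ^ (1-a)) ^ ((n:ℝ))
      = (θ/a) ^ t * ((1-θ)/(1-a)) ^ (n - t) := by
    rw [Real.mul_rpow (Real.rpow_nonneg (div_nonneg h0 ha0.le) _)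
        (Real.rpow_nonneg (div_nonneg (by linarith) h1a0.le) _),
      ← Real.rpow_natCast (θ/a) t, ← Real.rpow_natCast ((1-θ)/(1-a)) (n-t),
      ← Real.rpow_mul (div_nonneg h0 ha0.le),
      ← Real.rpow_mul (div_nonneg (by linarith) h1a0.le),
      show a * (n:ℝ) = ((t:ℕ):ℝ) by rw [ha_def]; field_simp,
      show (1-a) * (n:ℝ) = ((n - t:ℕ):ℝ) by rw [hcast, ha_def]; field_simp]
  rw [hexp] at keyn
  have hθa : (θ/a) ^ t * a ^ t = θ ^ t := by
    rw [← mul_pow, div_mul_cancel₀ _ ha0.ne']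
  have hθb : ((1-θ)/(1-a)) ^ (n-t) * (1-a) ^ (n-t) = (1-θ) ^ (n-t) := by
    rw [← mul_pow, div_mul_cancel₀ _ h1a0.ne']
  calc θ ^ t * (1 - θ) ^ (n - t)
      = ((θ/a) ^ t * ((1-θ)/(1-a)) ^ (n - t)) * (a ^ t * (1-a) ^ (n - t)) := by
        rw [← hθa, ← hθb]; ring
    _ ≤ 1 * (a ^ t * (1-a) ^ (n - t)) := by
        refine mul_le_mul_of_nonneg_right keyn ?_
        exact mul_nonneg (pow_nonneg ha0.le _) (pow_nonneg h1a0.le _)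
    _ = a ^ t * (1-a) ^ (n - t) := one_mul _


/-- Example 2 (Bernoulli model): with likelihood `L(θ) = C(n,t) θ^t (1−θ)^{n−t}` and
prior `Π = Beta(α₀, β₀)` (density `θ^{α₀−1}(1−θ)^{β₀−1}Γ(α₀+β₀)/(Γ(α₀)Γ(β₀))` with
respect to Lebesgue measure on `(0,1)`), the supremum over all probability measures
`Q` on `[0,1]` of `(∫ L dQ)/(∫ L dΠ)` equals
`[Γ(α₀)Γ(β₀)/Γ(α₀+β₀)]·[Γ(n+α₀+β₀)/(Γ(t+α₀)Γ(n−t+β₀))]·(t/n)^t (1−t/n)^{n−t}`. -/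
theorem bernoulli_worst_case_ratio
    (n t : ℕ) (hn : 1 ≤ n) (ht : t ≤ n)
    (α0 β0 : ℝ) (hα : 0 < α0) (hβ : 0 < β0)
    (L : ℝ → ℝ) (hL : ∀ θ, L θ = (n.choose t : ℝ) * θ ^ t * (1 - θ) ^ (n - t))
    (P : Measure ℝ)
    (hP : P = MeasureTheory.volume.withDensity (fun θ => ENNReal.ofReal
      (if θ ∈ Set.Ioo (0 : ℝ) 1 then
        θ ^ (α0 - 1) * (1 - θ) ^ (β0 - 1) * Real.Gamma (α0 + β0) /
          (Real.Gamma α0 * Real.Gamma β0)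
      else 0))) :
    (⨆ Q : ProbabilityMeasure (Set.Icc (0 : ℝ) 1),
        (∫ θ : Set.Icc (0 : ℝ) 1, L (θ : ℝ) ∂(Q : Measure (Set.Icc (0 : ℝ) 1))) /
          ∫ θ, L θ ∂P) =
      (Real.Gamma α0 * Real.Gamma β0 / Real.Gamma (α0 + β0)) *
        (Real.Gamma ((n : ℝ) + α0 + β0) /
          (Real.Gamma ((t : ℝ) + α0) * Real.Gamma ((n : ℝ) - (t : ℝ) + β0))) *
        ((t : ℝ) / (n : ℝ)) ^ t * (1 - (t : ℝ) / (n : ℝ)) ^ (n - t) := by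
  have hn0 : (0:ℝ) < n := by exact_mod_cast hn
  have htn : (t:ℝ) ≤ n := by exact_mod_cast ht
  set C : ℝ := (n.choose t : ℝ) with hC_def
  have hC : 0 < C := by rw [hC_def]; exact_mod_cast Nat.choose_pos ht
  have hGαβ : 0 < Real.Gamma (α0 + β0) := Real.Gamma_pos_of_pos (by linarith)
  have hGα : 0 < Real.Gamma α0 := Real.Gamma_pos_of_pos hα
  have hGβ : 0 < Real.Gamma β0 := Real.Gamma_pos_of_pos hβ
  have hGt : 0 < Real.Gamma ((t:ℝ) + α0) :=
    Real.Gamma_pos_of_pos (by positivity)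
  have hGnt : 0 < Real.Gamma ((n:ℝ) - t + β0) :=
    Real.Gamma_pos_of_pos (by nlinarith)
  have hGn : 0 < Real.Gamma ((n:ℝ) + α0 + β0) :=
    Real.Gamma_pos_of_pos (by positivity)
  set g : ℝ → ℝ := fun θ => if θ ∈ Ioo (0:ℝ) 1 then
      θ ^ (α0 - 1) * (1 - θ) ^ (β0 - 1) * Real.Gamma (α0 + β0) /
        (Real.Gamma α0 * Real.Gamma β0) else 0 with hg_def
  have hg_nonneg : ∀ θ, 0 ≤ g θ := by
    intro θ
    rw [hg_def]
    dsimp only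
    split_ifs with h
    · have h1 : 0 ≤ θ ^ (α0-1) := Real.rpow_nonneg h.1.le _
      have h2 : 0 ≤ (1-θ) ^ (β0-1) := Real.rpow_nonneg (by linarith [h.2]) _
      positivity
    · exact le_rfl
  have hg_meas : Measurable g := by
    rw [hg_def]
    apply Measurable.ite measurableSet_Ioo _ measurable_const
    fun_prop
  -- denominator computation
  have hD : ∫ θ, L θ ∂P = C * (Real.Gamma (α0 + β0) / (Real.Gamma α0 * Real.Gamma β0)) *
      (Real.Gamma ((t:ℝ) + α0) * Real.Gamma ((n:ℝ) - t + β0) / Real.Gamma (((t:ℝ) + α0) + ((n:ℝ) - t + β0))) := by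
    have hmeq : P = volume.withDensity (fun θ => ((Real.toNNReal (g θ) : ℝ≥0) : ℝ≥0∞)) := hP
    rw [hmeq, integral_withDensity_eq_integral_smul hg_meas.real_toNNReal]
    have hstep1 : ∀ θ : ℝ, (Real.toNNReal (g θ) : ℝ≥0) • L θ = g θ * L θ := by
      intro θ
      rw [NNReal.smul_def, smul_eq_mul, Real.coe_toNNReal _ (hg_nonneg θ)]
    simp only [hstep1]
    rw [← setIntegral_eq_integral_of_forall_compl_eq_zero
      (s := Ioo (0:ℝ) 1) (fun x hx => by rw [hg_def]; dsimp only; rw [if_neg hx, zero_mul])]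
    rw [setIntegral_congr_fun measurableSet_Ioo
      (g := fun θ => (C * (Real.Gamma (α0 + β0) / (Real.Gamma α0 * Real.Gamma β0))) *
        (θ ^ ((t:ℝ) + α0 - 1) * (1 - θ) ^ ((n:ℝ) - t + β0 - 1)))]
    · rw [integral_const_mul, realBetaIntegral (by positivity) (by nlinarith)]
    · intro θ hθ
      have hθ1 : (0:ℝ) < 1 - θ := by linarith [hθ.2]
      have e1 : θ ^ (α0 - 1) * θ ^ (t:ℕ) = θ ^ ((t:ℝ) + α0 - 1) := by
        rw [← Real.rpow_natCast θ t, ← Real.rpow_add hθ.1]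
        congr 1; ring
      have e2 : (1 - θ) ^ (β0 - 1) * (1 - θ) ^ (n - t : ℕ) = (1 - θ) ^ ((n:ℝ) - t + β0 - 1) := by
        rw [← Real.rpow_natCast (1-θ) (n-t), ← Real.rpow_add hθ1, Nat.cast_sub ht]
        congr 1; ring
      rw [hg_def]
      dsimp only
      rw [if_pos hθ, hL θ, ← e1, ← e2]
      ring
  rw [show ((t:ℝ) + α0 + ((n:ℝ) - t + β0)) = (n:ℝ) + α0 + β0 from by ring] at hD
  have hDpos : 0 < ∫ θ, L θ ∂P := by
    rw [hD]
    exact mul_pos (mul_pos hC (div_pos hGαβ (mul_pos hGα hGβ)))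
      (div_pos (mul_pos hGt hGnt) hGn)
  set M : ℝ := ((t:ℝ)/n) ^ t * (1 - (t:ℝ)/n) ^ (n - t) with hM_def
  have hub : ∀ Q : ProbabilityMeasure (Icc (0:ℝ) 1),
      (∫ θ : Icc (0:ℝ) 1, L (θ:ℝ) ∂(Q : Measure (Icc (0:ℝ) 1))) ≤ C * M := by
    intro Q
    have hbound : ∀ θ : Icc (0:ℝ) 1, ‖L (θ:ℝ)‖ ≤ C * M := by
      intro θ
      have h0 : 0 ≤ (θ:ℝ) := θ.2.1
      have h1 : (θ:ℝ) ≤ 1 := θ.2.2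
      rw [hL, Real.norm_eq_abs, abs_of_nonneg (mul_nonneg (mul_nonneg hC.le
        (pow_nonneg h0 _)) (pow_nonneg (by linarith) _)), mul_assoc, hM_def]
      exact mul_le_mul_of_nonneg_left (likelihood_le_max n t hn ht h0 h1) hC.le
    have hnorm := norm_integral_le_of_norm_le_const
      (μ := (Q : Measure (Icc (0:ℝ) 1))) (ae_of_all _ hbound)
    rw [measureReal_def, measure_univ, ENNReal.toReal_one, mul_one, Real.norm_eq_abs] at hnorm
    exact le_trans (le_abs_self _) hnorm
  have hmem : (t:ℝ)/n ∈ Icc (0:ℝ) 1 := ⟨by positivity, by rw [div_le_one hn0]; exact htn⟩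
  set p : Icc (0:ℝ) 1 := ⟨(t:ℝ)/n, hmem⟩ with hp_def
  set Q0 : ProbabilityMeasure (Icc (0:ℝ) 1) := ⟨Measure.dirac p, inferInstance⟩ with hQ0_def
  have hQ0 : (∫ θ : Icc (0:ℝ) 1, L (θ:ℝ) ∂(Q0 : Measure (Icc (0:ℝ) 1))) = C * M := by
    have hco : (Q0 : Measure (Icc (0:ℝ) 1)) = Measure.dirac p := rfl
    rw [hco, integral_dirac, hp_def, hL, mul_assoc, hM_def]
  have hEq : (C * M) / (∫ θ, L θ ∂P) =
      (Real.Gamma α0 * Real.Gamma β0 / Real.Gamma (α0 + β0)) *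
        (Real.Gamma ((n : ℝ) + α0 + β0) /
          (Real.Gamma ((t : ℝ) + α0) * Real.Gamma ((n : ℝ) - (t : ℝ) + β0))) *
        ((t : ℝ) / (n : ℝ)) ^ t * (1 - (t : ℝ) / (n : ℝ)) ^ (n - t) := by
    rw [hD, hM_def]
    field_simp
  rw [← hEq]
  have : Nonempty (ProbabilityMeasure (Icc (0:ℝ) 1)) := ⟨Q0⟩
  apply le_antisymm
  · refine ciSup_le fun Q => ?_
    exact div_le_div_of_nonneg_right (hub Q) hDpos.le
  · refine le_ciSup_of_le ⟨(C*M)/(∫ θ, L θ ∂P), ?_⟩ Q0 ?_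
    · rintro x ⟨Q, rfl⟩
      exact div_le_div_of_nonneg_right (hub Q) hDpos.le
    · rw [hQ0]
end
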